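/- arXiv:1108.4531 — 5 statements merged into one kernel-verified Lean document; each statement's English description precedes it below -/
import Mathlib

section
/- Let Q be an n×n nonnegative real matrix (n ≥ 1) and let q₀ ∈ ℝⁿ be a vector all of whose entries are strictly positive. For t ≥ 0 set q_t = (Qᵀ)^t q₀. Then the limit as t → ∞ of (‖q_t‖₁ / ‖q₀‖₁)^(1/t) exists and equals the spectral radius ρ(Q). (In the paper this says that the average rate of convergence to the optimal set of a randomly initialized absorbing evolutionary algorithm with transient transition submatrix Q equals 1 − ρ(Q).) -/
open Matrix

/-- The spectral radius of a real square matrix: the maximum of the moduli of its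
complex eigenvalues (`0` for an empty matrix, via `sSup ∅ = 0`). -/
noncomputable def specRad {n : Type*} [Fintype n] [DecidableEq n] (A : Matrix n n ℝ) : ℝ :=
  sSup ((fun z => ‖z‖) '' spectrum ℂ (A.map Complex.ofReal))

section Aux

attribute [local instance] Matrix.linftyOpNormedRing Matrix.linftyOpNormedAlgebra

lemma aux_row_sum_eq {n : ℕ} (B : Matrix (Fin n) (Fin n) ℝ) (hB : ∀ i j, 0 ≤ B i j) (j : Fin n) :
    ((∑ i, ‖(B.map Complex.ofReal) j i‖₊ : NNReal) : ℝ) = ∑ i, B j i := by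
  push_cast
  refine Finset.sum_congr rfl fun i _ => ?_
  simp only [Matrix.map_apply, coe_nnnorm, Complex.norm_real, Real.norm_eq_abs]
  exact abs_of_nonneg (hB j i)

lemma aux_row_sum_le_norm {n : ℕ} (B : Matrix (Fin n) (Fin n) ℝ) (hB : ∀ i j, 0 ≤ B i j)
    (j : Fin n) : ∑ i, B j i ≤ ‖B.map Complex.ofReal‖ := by
  rw [Matrix.linfty_opNorm_def, ← aux_row_sum_eq B hB j]
  exact_mod_cast NNReal.coe_le_coe.mpr
    (Finset.le_sup (f := fun j => ∑ i, ‖(B.map Complex.ofReal) j i‖₊) (Finset.mem_univ j))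

lemma aux_norm_le_total {n : ℕ} (B : Matrix (Fin n) (Fin n) ℝ) (hB : ∀ i j, 0 ≤ B i j) :
    ‖B.map Complex.ofReal‖ ≤ ∑ j, ∑ i, B j i := by
  rw [Matrix.linfty_opNorm_def]
  have h : (Finset.univ.sup fun j => ∑ i, ‖(B.map Complex.ofReal) j i‖₊)
      ≤ ∑ j, ∑ i, ‖(B.map Complex.ofReal) j i‖₊ :=
    Finset.sup_le fun j _ => Finset.single_le_sum
      (f := fun j => ∑ i, ‖(B.map Complex.ofReal) j i‖₊) (fun j _ => zero_le)
      (Finset.mem_univ j)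
  calc ((Finset.univ.sup fun j => ∑ i, ‖(B.map Complex.ofReal) j i‖₊ : NNReal) : ℝ)
      ≤ ((∑ j, ∑ i, ‖(B.map Complex.ofReal) j i‖₊ : NNReal) : ℝ) := NNReal.coe_le_coe.mpr h
    _ = ∑ j, ∑ i, B j i := by
        rw [NNReal.coe_sum]
        exact Finset.sum_congr rfl fun j _ => aux_row_sum_eq B hB j

lemma aux_pow_nonneg {n : ℕ} (Q : Matrix (Fin n) (Fin n) ℝ) (hQ : ∀ i j, 0 ≤ Q i j) (t : ℕ) :
    ∀ i j, 0 ≤ (Q ^ t) i j := by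
  induction t with
  | zero => intro i j; simp [Matrix.one_apply]; positivity
  | succ t ih =>
    intro i j
    rw [pow_succ, Matrix.mul_apply]
    exact Finset.sum_nonneg fun k _ => mul_nonneg (ih i k) (hQ k j)

lemma aux_gelfand_real {n : ℕ} (hn : 1 ≤ n) (Q : Matrix (Fin n) (Fin n) ℝ) :
    Filter.Tendsto (fun t : ℕ => ‖(Q ^ t).map Complex.ofReal‖ ^ ((1 : ℝ) / t))
      Filter.atTop (nhds (specRad Q)) := by
  haveI : Nonempty (Fin n) := ⟨⟨0, hn⟩⟩
  set A : Matrix (Fin n) (Fin n) ℂ := Q.map Complex.ofReal with hA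
  obtain ⟨z, hz, hzr⟩ := spectrum.exists_nnnorm_eq_spectralRadius A
  have hmap : ∀ t : ℕ, (Q ^ t).map Complex.ofReal = A ^ t := by
    intro t
    have h : A = Complex.ofRealHom.mapMatrix Q := rfl
    rw [h, ← map_pow, RingHom.mapMatrix_apply]
    rfl
  have hspec : specRad Q = ‖z‖ := by
    refine IsGreatest.csSup_eq ⟨⟨z, hz, rfl⟩, fun x hx => ?_⟩
    obtain ⟨w, hw, rfl⟩ := hx
    have : (‖w‖₊ : ENNReal) ≤ spectralRadius ℂ A :=
      le_iSup₂ (f := fun k (_ : k ∈ spectrum ℂ A) => (‖k‖₊ : ENNReal)) w hw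
    rw [← hzr] at this
    exact_mod_cast this
  rw [hspec]
  have hG := spectrum.pow_nnnorm_pow_one_div_tendsto_nhds_spectralRadius A
  rw [← hzr] at hG
  have hG' := (ENNReal.tendsto_toReal (ENNReal.coe_ne_top)).comp hG
  simp only [Function.comp_def] at hG'
  have : ∀ t : ℕ, ((‖A ^ t‖₊ : ENNReal) ^ ((1:ℝ) / t)).toReal = ‖(Q ^ t).map Complex.ofReal‖ ^ ((1:ℝ)/t) := by
    intro t
    rw [← ENNReal.toReal_rpow, ENNReal.coe_toReal, coe_nnnorm, hmap]
  rw [show ((‖z‖₊ : ENNReal)).toReal = ‖z‖ by simp] at hG'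
  exact hG'.congr this

/-- for a nonnegative `n × n` matrix `Q` (`n ≥ 1`) and a strictly positive
initial vector `q₀`, with `q_t = (Qᵀ)^t q₀`, the quantity `(‖q_t‖₁ / ‖q₀‖₁)^(1/t)`
converges to the spectral radius `ρ(Q)` as `t → ∞`. -/
theorem stmt_0 (n : ℕ) (hn : 1 ≤ n) (Q : Matrix (Fin n) (Fin n) ℝ)
    (hQ : ∀ i j, 0 ≤ Q i j) (q₀ : Fin n → ℝ) (hq₀ : ∀ i, 0 < q₀ i) :
    Filter.Tendsto
      (fun t : ℕ =>
        ((∑ i, |((Qᵀ ^ t) *ᵥ q₀) i|) / (∑ i, |q₀ i|)) ^ ((1 : ℝ) / t))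
      Filter.atTop (nhds (specRad Q)) := by
  haveI : Nonempty (Fin n) := ⟨⟨0, hn⟩⟩
  -- notation
  set N : ℕ → ℝ := fun t => ‖(Q ^ t).map Complex.ofReal‖ with hN
  have hNnn : ∀ t, 0 ≤ N t := fun t => norm_nonneg _
  -- the ℓ¹ mass of q_t
  have hpow := aux_pow_nonneg Q hQ
  have hqt : ∀ t : ℕ, (∑ i, |((Qᵀ ^ t) *ᵥ q₀) i|) = ∑ j, q₀ j * ∑ i, (Q ^ t) j i := by
    intro t
    have ht : (Qᵀ) ^ t = (Q ^ t)ᵀ := (Matrix.transpose_pow Q t).symm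
    calc (∑ i, |((Qᵀ ^ t) *ᵥ q₀) i|) = ∑ i, ∑ j, (Q ^ t) j i * q₀ j := by
          refine Finset.sum_congr rfl fun i _ => ?_
          rw [ht, Matrix.mulVec, dotProduct]
          simp only [Matrix.transpose_apply]
          exact abs_of_nonneg (Finset.sum_nonneg fun j _ =>
            mul_nonneg (hpow t j i) (hq₀ j).le)
      _ = ∑ j, q₀ j * ∑ i, (Q ^ t) j i := by
          rw [Finset.sum_comm]
          exact Finset.sum_congr rfl fun j _ => by
            rw [Finset.mul_sum]
            exact Finset.sum_congr rfl fun i _ => mul_comm _ _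
  -- min/max of q₀
  obtain ⟨jm, _, hjm⟩ := Finset.exists_min_image Finset.univ q₀ Finset.univ_nonempty
  obtain ⟨jM, _, hjM⟩ := Finset.exists_max_image Finset.univ q₀ Finset.univ_nonempty
  set c : ℝ := ∑ i, |q₀ i| with hc
  have hcpos : 0 < c := Finset.sum_pos (fun i _ => abs_pos.mpr (hq₀ i).ne') Finset.univ_nonempty
  set a : ℝ := q₀ jm / c with ha
  set b : ℝ := q₀ jM * n / c with hb
  have hapos : 0 < a := div_pos (hq₀ jm) hcpos
  have hbpos : 0 < b := div_pos (mul_pos (hq₀ jM) (by exact_mod_cast hn)) hcpos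
  -- bounds:  a * N t ≤ f t ≤ b * N t
  have hlow : ∀ t : ℕ, a * N t ≤ (∑ i, |((Qᵀ ^ t) *ᵥ q₀) i|) / c := by
    intro t
    rw [hqt, ha, div_mul_eq_mul_div, div_le_div_iff_of_pos_right hcpos]
    calc q₀ jm * N t ≤ q₀ jm * ∑ j, ∑ i, (Q ^ t) j i :=
          mul_le_mul_of_nonneg_left (aux_norm_le_total _ (hpow t)) (hq₀ jm).le
      _ = ∑ j, q₀ jm * ∑ i, (Q ^ t) j i := by rw [Finset.mul_sum]
      _ ≤ ∑ j, q₀ j * ∑ i, (Q ^ t) j i :=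
          Finset.sum_le_sum fun j _ => mul_le_mul_of_nonneg_right
            (hjm j (Finset.mem_univ j))
            (Finset.sum_nonneg fun i _ => hpow t j i)
  have hhigh : ∀ t : ℕ, (∑ i, |((Qᵀ ^ t) *ᵥ q₀) i|) / c ≤ b * N t := by
    intro t
    rw [hqt, hb, div_mul_eq_mul_div, div_le_div_iff_of_pos_right hcpos]
    calc ∑ j, q₀ j * ∑ i, (Q ^ t) j i ≤ ∑ j, q₀ jM * N t :=
          Finset.sum_le_sum fun j _ =>
            mul_le_mul (hjM j (Finset.mem_univ j)) (aux_row_sum_le_norm _ (hpow t) j)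
              (Finset.sum_nonneg fun i _ => hpow t j i) (hq₀ jM).le
      _ = q₀ jM * n * N t := by
          rw [Finset.sum_const, Finset.card_univ, Fintype.card_fin, nsmul_eq_mul]; ring
  -- limits of the bounding sequences
  have hone : ∀ d : ℝ, 0 < d →
      Filter.Tendsto (fun t : ℕ => d ^ ((1:ℝ)/t)) Filter.atTop (nhds 1) := by
    intro d hd
    have h0 : Filter.Tendsto (fun t : ℕ => (1:ℝ)/t) Filter.atTop (nhds 0) :=
      tendsto_one_div_atTop_nhds_zero_nat
    have := ((Real.continuousAt_const_rpow (a := d) (b := 0) hd.ne').tendsto).comp h0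
    simpa [Real.rpow_zero, Function.comp_def] using this
  have hGel := aux_gelfand_real hn Q
  have hlowlim : Filter.Tendsto (fun t : ℕ => (a * N t) ^ ((1:ℝ)/t)) Filter.atTop
      (nhds (specRad Q)) := by
    have := (hone a hapos).mul hGel
    rw [one_mul] at this
    refine this.congr fun t => ?_
    rw [← Real.mul_rpow hapos.le (hNnn t)]
  have hhighlim : Filter.Tendsto (fun t : ℕ => (b * N t) ^ ((1:ℝ)/t)) Filter.atTop
      (nhds (specRad Q)) := by
    have := (hone b hbpos).mul hGel
    rw [one_mul] at this
    refine this.congr fun t => ?_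
    rw [← Real.mul_rpow hbpos.le (hNnn t)]
  -- squeeze
  refine tendsto_of_tendsto_of_tendsto_of_le_of_le hlowlim hhighlim ?_ ?_
  · intro t
    exact Real.rpow_le_rpow (mul_nonneg hapos.le (hNnn t)) (hlow t)
      (by positivity)
  · intro t
    refine Real.rpow_le_rpow ?_ (hhigh t) (by positivity)
    exact div_nonneg (Finset.sum_nonneg fun i _ => abs_nonneg _) hcpos.le

end Aux
end

section
/- Consider the (1+1) elitist EA and a (μ+μ) elitist EA with μ ≥ 2 using the same global mutation operator M on the same fitness function f, as in the model below. Assume S_non is nonempty, the mutation operator M is global, the selection operator P_S is elitist, and P¹(x,x) > 0 for at least one non-optimal x ∈ S_non. Then ρ(Q^μ) < ρ(Q¹); equivalently, the ρ-scalability (1 − ρ(Q^μ))/(1 − ρ(Q¹)) is strictly greater than 1, i.e. the average convergence rate of the (μ+μ) EA is strictly larger than that of the (1+1) EA. -/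
open Matrix

variable {S : Type*} [Fintype S] [LinearOrder S]

/-- `x` is an optimal individual for the fitness function `f`. -/
abbrev Sopt (f : S → ℝ) (x : S) : Prop := ∀ y, f y ≤ f x

/-- `x` is a non-optimal individual for the fitness function `f`. -/
abbrev Snon (f : S → ℝ) (x : S) : Prop := ¬ Sopt f x

/-- The transition matrix of the `(1+1)` elitist EA with mutation operator `M` and
fitness `f`: move to a strictly fitter mutant, otherwise stay put. -/
noncomputable def P1 (f : S → ℝ) (M : Matrix S S ℝ) : Matrix S S ℝ :=
  Matrix.of fun x z =>
    if f x < f z then M x z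
    else if z = x then ∑ y ∈ Finset.univ.filter (fun y => f y ≤ f x), M x y
    else 0

/-- The restriction `Q¹` of the `(1+1)` elitist EA transition matrix to the
non-optimal states. -/
noncomputable def Q1 (f : S → ℝ) (M : Matrix S S ℝ) :
    Matrix {x : S // Snon f x} {x : S // Snon f x} ℝ :=
  Matrix.of fun a b => P1 f M a.1 b.1

/-- The transition matrix `P^μ` of the `(μ+μ)` EA with mutation operator `M` and
selection operator `PS`: mutate each individual independently, then select. -/
noncomputable def Pmu {μ : ℕ} (M : Matrix S S ℝ)
    (PS : (Fin μ → S) → (Fin μ → S) → (Fin μ → S) → ℝ) :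
    Matrix (Fin μ → S) (Fin μ → S) ℝ :=
  Matrix.of fun X Z => ∑ Y : Fin μ → S, (∏ i, M (X i) (Y i)) * PS X Y Z

/-- The restriction `Q^μ` of the `(μ+μ)` EA transition matrix to the set `S^μ_non` of
populations containing no optimal individual. -/
noncomputable def Qmu {μ : ℕ} (f : S → ℝ) (M : Matrix S S ℝ)
    (PS : (Fin μ → S) → (Fin μ → S) → (Fin μ → S) → ℝ) :
    Matrix {X : Fin μ → S // ∀ i, Snon f (X i)} {X : Fin μ → S // ∀ i, Snon f (X i)} ℝ :=
  Matrix.of fun A B => Pmu M PS A.1 B.1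


section Helpers

/-- weighted row-sum bound on eigenvalue moduli -/
lemma norm_spectrum_le' {n : Type*} [Fintype n] [DecidableEq n] (A : Matrix n n ℝ)
    (hA : ∀ i j, 0 ≤ A i j) (w : n → ℝ) (hw : ∀ i, 0 < w i) (θ : ℝ)
    (hrow : ∀ i, ∑ j, A i j * w j ≤ θ * w i) :
    ∀ z ∈ spectrum ℂ (A.map Complex.ofReal), ‖z‖ ≤ θ := by
  classical
  intro z hz
  rw [spectrum.mem_iff, Matrix.isUnit_iff_isUnit_det, isUnit_iff_ne_zero, not_not] at hz
  obtain ⟨v, hv0, hv⟩ := (Matrix.exists_mulVec_eq_zero_iff).2 hz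
  have hveq : ∀ i, z * v i = ∑ j, (A i j : ℂ) * v j := by
    intro i
    have h1 := congrFun hv i
    rw [Algebra.algebraMap_eq_smul_one, sub_mulVec, smul_mulVec, one_mulVec] at h1
    have h2 : (z • v - (A.map Complex.ofReal) *ᵥ v) i = 0 := h1 ▸ rfl
    simp only [Pi.sub_apply, Pi.smul_apply, smul_eq_mul, sub_eq_zero] at h2
    rw [h2]
    simp [Matrix.mulVec, dotProduct, Matrix.map_apply]
  obtain ⟨i₁, hvi₁⟩ := Function.ne_iff.mp hv0
  have hne : (Finset.univ : Finset n).Nonempty := ⟨i₁, Finset.mem_univ _⟩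
  obtain ⟨i₀, _, hmax⟩ := Finset.exists_max_image Finset.univ (fun i => ‖v i‖ / w i) hne
  set t : ℝ := ‖v i₀‖ / w i₀ with ht
  have hub : ∀ j, ‖v j‖ ≤ t * w j := by
    intro j
    have := hmax j (Finset.mem_univ j)
    exact (div_le_iff₀ (hw j)).1 this
  have hti : t * w i₀ = ‖v i₀‖ := by
    rw [ht, div_mul_cancel₀ _ (hw i₀).ne']
  have htpos : 0 < t := by
    have h1 : (0:ℝ) < ‖v i₁‖ := by simpa [norm_pos_iff] using hvi₁
    have h2 := hub i₁
    nlinarith [hw i₁]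
  have hvpos : 0 < ‖v i₀‖ := by rw [← hti]; exact mul_pos htpos (hw i₀)
  have key : ‖z‖ * ‖v i₀‖ ≤ θ * ‖v i₀‖ := by
    calc ‖z‖ * ‖v i₀‖ = ‖z * v i₀‖ := (norm_mul _ _).symm
      _ = ‖∑ j, (A i₀ j : ℂ) * v j‖ := by rw [hveq i₀]
      _ ≤ ∑ j, ‖(A i₀ j : ℂ) * v j‖ := norm_sum_le _ _
      _ = ∑ j, A i₀ j * ‖v j‖ := by
          refine Finset.sum_congr rfl fun j _ => ?_
          rw [norm_mul, Complex.norm_real, Real.norm_eq_abs, abs_of_nonneg (hA i₀ j)]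
      _ ≤ ∑ j, A i₀ j * (t * w j) := by
          refine Finset.sum_le_sum fun j _ => ?_
          exact mul_le_mul_of_nonneg_left (hub j) (hA i₀ j)
      _ = t * ∑ j, A i₀ j * w j := by
          rw [Finset.mul_sum]
          exact Finset.sum_congr rfl fun j _ => by ring
      _ ≤ t * (θ * w i₀) := mul_le_mul_of_nonneg_left (hrow i₀) htpos.le
      _ = θ * (t * w i₀) := by ring
      _ = θ * ‖v i₀‖ := by rw [hti]
  exact le_of_mul_le_mul_right key hvpos

lemma specRad_le' {n : Type*} [Fintype n] [DecidableEq n] (A : Matrix n n ℝ)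
    (hA : ∀ i j, 0 ≤ A i j) (w : n → ℝ) (hw : ∀ i, 0 < w i) (θ : ℝ) (hθ : 0 ≤ θ)
    (hrow : ∀ i, ∑ j, A i j * w j ≤ θ * w i) : specRad A ≤ θ := by
  apply Real.sSup_le _ hθ
  rintro x ⟨z, hz, rfl⟩
  exact norm_spectrum_le' A hA w hw θ hrow z hz

lemma det_eq_prod_diag_of_key {n R α : Type*} [Fintype n] [DecidableEq n] [CommRing R]
    [LinearOrder α] (key : n → α) (hkey : Function.Injective key) (A : Matrix n n R)
    (h : ∀ i j, key j < key i → A i j = 0) : A.det = ∏ i, A i i := by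
  classical
  let e : n ≃ Set.range key := Equiv.ofInjective key hkey
  rw [← Matrix.det_submatrix_equiv_self e.symm A]
  rw [Matrix.det_of_upperTriangular]
  · exact Equiv.prod_comp e.symm (fun x => A x x)
  · intro i j hji
    apply h
    have hi : key (e.symm i) = (i : α) := Equiv.apply_ofInjective_symm hkey i
    have hj : key (e.symm j) = (j : α) := Equiv.apply_ofInjective_symm hkey j
    rw [hi, hj]
    exact hji

lemma diag_mem_spectrum' {n α : Type*} [Fintype n] [DecidableEq n] [LinearOrder α]
    (key : n → α) (hkey : Function.Injective key) (A : Matrix n n ℝ)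
    (h : ∀ i j, key j < key i → A i j = 0) (i₀ : n) :
    ((A i₀ i₀ : ℝ) : ℂ) ∈ spectrum ℂ (A.map Complex.ofReal) := by
  classical
  rw [spectrum.mem_iff, Matrix.isUnit_iff_isUnit_det, isUnit_iff_ne_zero, not_not]
  set B : Matrix n n ℂ :=
    algebraMap ℂ (Matrix n n ℂ) ((A i₀ i₀ : ℝ) : ℂ) - A.map Complex.ofReal with hB
  have htri : ∀ i j, key j < key i → B i j = 0 := by
    intro i j hij
    have hij' : i ≠ j := fun e => absurd (e ▸ hij) (lt_irrefl _)
    rw [hB, Algebra.algebraMap_eq_smul_one]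
    simp [Matrix.sub_apply, Matrix.smul_apply, Matrix.one_apply_ne' (Ne.symm hij').symm,
      Matrix.map_apply, h i j hij, Matrix.one_apply_ne hij']
  rw [det_eq_prod_diag_of_key key hkey B htri]
  refine Finset.prod_eq_zero (Finset.mem_univ i₀) ?_
  rw [hB, Algebra.algebraMap_eq_smul_one]
  simp [Matrix.sub_apply, Matrix.smul_apply, Matrix.one_apply_eq, Matrix.map_apply]

lemma sum_finset_subtype_le' {α : Type*} [Fintype α] [DecidableEq α] {p : α → Prop}
    [DecidablePred p] (t : Finset (Subtype p)) (g : α → ℝ) (hg : ∀ a, 0 ≤ g a) :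
    ∑ b ∈ t, g b.1 ≤ ∑ a, g a := by
  have h1 : ∑ x ∈ t.image Subtype.val, g x = ∑ b ∈ t, g b.1 :=
    Finset.sum_image (fun x _ y _ h => Subtype.val_injective h)
  rw [← h1]
  exact Finset.sum_le_sum_of_subset_of_nonneg (Finset.subset_univ _) fun _ _ _ => hg _

end Helpers

/-- for a `(1+1)` elitist EA and a `(μ+μ)` elitist EA (`μ ≥ 2`) with the
same global mutation operator `M` on the same fitness function `f`, if `S_non ≠ ∅` and
some non-optimal state has positive self-transition probability, then
`ρ(Q^μ) < ρ(Q¹)`: the average convergence rate of the `(μ+μ)` EA is strictly larger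
than that of the `(1+1)` EA (`ρ`-scalability `> 1`).

Here `best` is the best-individual map (entry of maximal fitness, ties broken by the
linear order on `S`) and `PS` is an elitist selection operator. -/
theorem stmt_8 (f : S → ℝ) (M : Matrix S S ℝ)
    (hM0 : ∀ x y, 0 ≤ M x y) (hM1 : ∀ x, ∑ y, M x y = 1)
    (hMglobal : ∀ x : S, 0 < ∑ y ∈ Finset.univ.filter (fun y => Sopt f y), M x y)
    (μ : ℕ) (hμ : 2 ≤ μ)
    (best : (Fin μ → S) → S)
    (hbest_mem : ∀ X, ∃ i, best X = X i)
    (hbest_max : ∀ X i, f (X i) ≤ f (best X))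
    (hbest_tie : ∀ X i, f (X i) = f (best X) → X i ≤ best X)
    (PS : (Fin μ → S) → (Fin μ → S) → (Fin μ → S) → ℝ)
    (hPS0 : ∀ X Y Z, 0 ≤ PS X Y Z)
    (hPS1 : ∀ X Y, ∑ Z : Fin μ → S, PS X Y Z = 1)
    (hPS_src : ∀ X Y Z, 0 < PS X Y Z → ∀ i, (∃ j, Z i = X j) ∨ (∃ j, Z i = Y j))
    (hPS_elite : ∀ X Y Z, 0 < PS X Y Z →
      (f (best X) < f (best Y) → best Z = best Y) ∧
      (¬ f (best X) < f (best Y) → best Z = best X))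
    (hSnon : ∃ x : S, Snon f x)
    (hself : ∃ x : S, Snon f x ∧ 0 < P1 f M x x) :
    specRad (Qmu f M PS) < specRad (Q1 f M) := by
  classical
  obtain ⟨x₀, hx₀non, hx₀self⟩ := hself
  -- the staying probability p
  set p : S → ℝ := fun x => ∑ y ∈ Finset.univ.filter (fun y => f y ≤ f x), M x y with hp
  have hp_nonneg : ∀ x, 0 ≤ p x := fun x => Finset.sum_nonneg fun y _ => hM0 x y
  have hp_le_one : ∀ x, p x ≤ 1 := fun x => by
    rw [← hM1 x]
    exact Finset.sum_le_sum_of_subset_of_nonneg (Finset.filter_subset _ _)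
      fun y _ _ => hM0 x y
  have hP1diag : ∀ x, P1 f M x x = p x := by
    intro x; simp [P1, lt_irrefl, hp]
  have hx₀p : 0 < p x₀ := by rw [← hP1diag]; exact hx₀self
  -- the maximal staying probability pm
  obtain ⟨xs, _, hxs⟩ := Finset.exists_max_image
    (Finset.univ : Finset {x : S // Snon f x}) (fun a => p a.1)
    ⟨⟨x₀, hx₀non⟩, Finset.mem_univ _⟩
  set pm : ℝ := p xs.1 with hpm
  have hpm_pos : 0 < pm := lt_of_lt_of_le hx₀p (hxs ⟨x₀, hx₀non⟩ (Finset.mem_univ _))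
  have hpm_le_one : pm ≤ 1 := hp_le_one _
  have hpmax : ∀ x : S, Snon f x → p x ≤ pm := fun x hx => hxs ⟨x, hx⟩ (Finset.mem_univ _)
  -- the constant c
  obtain ⟨zδ, _, hzδ⟩ := Finset.exists_min_image (Finset.univ : Finset S)
    (fun z => ∑ y ∈ Finset.univ.filter (fun y => Sopt f y), M z y)
    ⟨x₀, Finset.mem_univ _⟩
  set δ : ℝ := ∑ y ∈ Finset.univ.filter (fun y => Sopt f y), M zδ y with hδ
  have hδpos : 0 < δ := hMglobal zδ
  have hδle1 : δ ≤ 1 := by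
    rw [hδ, ← hM1 zδ]
    exact Finset.sum_le_sum_of_subset_of_nonneg (Finset.filter_subset _ _)
      fun y _ _ => hM0 zδ y
  set c : ℝ := 1 - δ with hc
  have hc_lt : c < 1 := by rw [hc]; linarith
  have hc_nonneg : 0 ≤ c := by rw [hc]; linarith
  -- sub-level mass bound
  have hlow_le_c : ∀ (x : S), Snon f x → ∀ z : S,
      (∑ y ∈ Finset.univ.filter (fun y => f y ≤ f x), M z y) ≤ c := by
    intro x hx z
    have hsub : Finset.univ.filter (fun y => f y ≤ f x) ⊆
        Finset.univ.filter (fun y => ¬ Sopt f y) := by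
      intro y hy
      simp only [Finset.mem_filter, Finset.mem_univ, true_and] at *
      exact fun hopt => hx fun w => le_trans (hopt w) hy
    have h1 : (∑ y ∈ Finset.univ.filter (fun y => f y ≤ f x), M z y) ≤
        ∑ y ∈ Finset.univ.filter (fun y => ¬ Sopt f y), M z y :=
      Finset.sum_le_sum_of_subset_of_nonneg hsub fun y _ _ => hM0 z y
    have h2 : (∑ y ∈ Finset.univ.filter (fun y => Sopt f y), M z y)
        + ∑ y ∈ Finset.univ.filter (fun y => ¬ Sopt f y), M z y = 1 := by
      rw [Finset.sum_filter_add_sum_filter_not]; exact hM1 z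
    have h3 := hzδ z (Finset.mem_univ z)
    rw [hc]; linarith
  -- epsilon and theta
  set ε : ℝ := pm * (1 - c) / 2 with hε
  have hε0 : 0 < ε := by rw [hε]; nlinarith
  have hε1 : ε ≤ 1 := by rw [hε]; nlinarith
  set θ : ℝ := pm * (1 + c) / 2 with hθ
  have hθsplit : pm * c + ε = θ := by rw [hθ, hε]; ring
  have hθ_lt : θ < pm := by rw [hθ]; nlinarith
  have hθ0 : 0 ≤ θ := by rw [hθ]; nlinarith
  -- ===================== lower bound : pm ≤ specRad (Q1 f M) =====================
  have hP1nonneg : ∀ x z, 0 ≤ P1 f M x z := by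
    intro x z
    simp only [P1, Matrix.of_apply]
    split_ifs
    · exact hM0 x z
    · exact Finset.sum_nonneg fun y _ => hM0 x y
    · exact le_refl 0
  have hP1row : ∀ x, ∑ z, P1 f M x z = 1 := by
    intro x
    rw [← Finset.sum_filter_add_sum_filter_not Finset.univ (fun z => f x < f z) (P1 f M x)]
    have h1 : ∑ z ∈ Finset.univ.filter (fun z => f x < f z), P1 f M x z
        = ∑ z ∈ Finset.univ.filter (fun z => f x < f z), M x z := by
      refine Finset.sum_congr rfl fun z hz => ?_
      simp only [Finset.mem_filter] at hz
      simp [P1, hz.2]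
    have h2 : ∑ z ∈ Finset.univ.filter (fun z => ¬ f x < f z), P1 f M x z = p x := by
      have : ∀ z ∈ Finset.univ.filter (fun z => ¬ f x < f z),
          P1 f M x z = if z = x then p x else 0 := by
        intro z hz
        simp only [Finset.mem_filter] at hz
        simp [P1, hz.2, hp]
      rw [Finset.sum_congr rfl this, Finset.sum_ite_eq' _ x (fun _ => p x)]
      simp [lt_irrefl]
    rw [h1, h2]
    have h3 : p x = ∑ z ∈ Finset.univ.filter (fun z => ¬ f x < f z), M x z := by
      rw [hp]
      refine Finset.sum_congr ?_ fun _ _ => rfl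
      ext y; simp [not_lt]
    rw [h3, Finset.sum_filter_add_sum_filter_not]
    exact hM1 x
  have hQ1nonneg : ∀ a b, 0 ≤ Q1 f M a b := fun a b => hP1nonneg a.1 b.1
  have hQ1row : ∀ a : {x : S // Snon f x}, ∑ b, Q1 f M a b * (1:ℝ) ≤ 1 * (1:ℝ) := by
    intro a
    simp only [mul_one, one_mul]
    calc ∑ b : {x : S // Snon f x}, Q1 f M a b
        = ∑ b : {x : S // Snon f x}, P1 f M a.1 b.1 := rfl
      _ ≤ ∑ z, P1 f M a.1 z :=
          sum_finset_subtype_le' Finset.univ (P1 f M a.1) (hP1nonneg a.1)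
      _ = 1 := hP1row a.1
  have hQ1bdd : BddAbove ((fun z => ‖z‖) '' spectrum ℂ ((Q1 f M).map Complex.ofReal)) := by
    refine ⟨1, ?_⟩
    rintro x ⟨z, hz, rfl⟩
    exact norm_spectrum_le' (Q1 f M) hQ1nonneg (fun _ => (1:ℝ)) (fun _ => one_pos) 1 hQ1row z hz
  -- triangularity of Q1
  have hkey1inj : Function.Injective
      (fun a : {x : S // Snon f x} => toLex ((f a.1, a.1) : ℝ × S)) := by
    intro a b h
    have := congrArg (fun q => (ofLex q).2) h
    exact Subtype.ext this
  have htri1 : ∀ i j : {x : S // Snon f x},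
      (fun a : {x : S // Snon f x} => toLex ((f a.1, a.1) : ℝ × S)) j <
      (fun a : {x : S // Snon f x} => toLex ((f a.1, a.1) : ℝ × S)) i → Q1 f M i j = 0 := by
    intro i j hij
    rw [Prod.Lex.lt_iff] at hij
    have h1 : ¬ f i.1 < f j.1 := by
      rcases hij with h | ⟨h, _⟩
      · exact not_lt.2 h.le
      · exact not_lt.2 (le_of_eq (show f j.1 = f i.1 from h))
    have h2 : j.1 ≠ i.1 := by
      rcases hij with h | ⟨_, h⟩
      · intro e; have h' : f j.1 < f i.1 := h; rw [e] at h'; exact lt_irrefl _ h'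
      · exact ne_of_lt h
    simp [Q1, P1, h1, h2]
  have hmem : ((pm : ℝ) : ℂ) ∈ spectrum ℂ ((Q1 f M).map Complex.ofReal) := by
    have h := diag_mem_spectrum' _ hkey1inj (Q1 f M) htri1 xs
    have hd : Q1 f M xs xs = pm := by
      show P1 f M xs.1 xs.1 = pm
      rw [hP1diag, hpm]
    rwa [hd] at h
  have hlow : pm ≤ specRad (Q1 f M) := by
    have h1 : pm = ‖((pm : ℝ) : ℂ)‖ := by
      rw [Complex.norm_real, Real.norm_eq_abs, abs_of_nonneg hpm_pos.le]
    rw [specRad]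
    rw [h1]
    exact le_csSup hQ1bdd ⟨_, hmem, rfl⟩
  -- ===================== upper bound : specRad (Qmu) ≤ θ =====================
  have hPmu0 : ∀ A B : Fin μ → S, 0 ≤ Pmu M PS A B := by
    intro A B
    refine Finset.sum_nonneg fun Y _ => mul_nonneg ?_ (hPS0 A Y B)
    exact Finset.prod_nonneg fun i _ => hM0 _ _
  have hPmurow : ∀ A : Fin μ → S, ∑ B, Pmu M PS A B = 1 := by
    intro A
    have h1 : ∑ B : Fin μ → S, Pmu M PS A B
        = ∑ Y : Fin μ → S, (∏ i, M (A i) (Y i)) * ∑ B : Fin μ → S, PS A Y B := by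
      simp only [Pmu, Matrix.of_apply]
      rw [Finset.sum_comm]
      exact Finset.sum_congr rfl fun Y _ => (Finset.mul_sum _ _ _).symm
    rw [h1]
    have h2 : ∑ Y : Fin μ → S, ∏ i, M (A i) (Y i) = 1 := by
      have h3 := Finset.prod_univ_sum (fun _ : Fin μ => (Finset.univ : Finset S))
        (fun i y => M (A i) y)
      rw [Fintype.piFinset_univ] at h3
      rw [← h3]
      simp [hM1]
    simp only [hPS1, mul_one]
    exact h2
  set L : (Fin μ → S) → ℕ :=
    fun X => (Finset.univ.filter (fun y => f y ≤ f (best X))).card with hL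
  have hrowμ : ∀ X : {X : Fin μ → S // ∀ i, Snon f (X i)},
      ∑ Z : {X : Fin μ → S // ∀ i, Snon f (X i)},
        Qmu f M PS X Z * ε ^ (L Z.1) ≤ θ * ε ^ (L X.1) := by
    intro X
    obtain ⟨j, hj⟩ := hbest_mem X.1
    set x : S := best X.1 with hx
    have hxnon : Snon f x := by rw [hj]; exact X.2 j
    -- split the sum
    rw [← Finset.sum_filter_add_sum_filter_not Finset.univ
      (fun Z : {X : Fin μ → S // ∀ i, Snon f (X i)} => best Z.1 = x)
      (fun Z => Qmu f M PS X Z * ε ^ (L Z.1))]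
    -- Part A
    have hA : ∑ Z ∈ Finset.univ.filter
          (fun Z : {X : Fin μ → S // ∀ i, Snon f (X i)} => best Z.1 = x),
          Qmu f M PS X Z * ε ^ (L Z.1) ≤ (pm * c) * ε ^ (L X.1) := by
      have hLeq : ∀ Z : {X : Fin μ → S // ∀ i, Snon f (X i)}, best Z.1 = x →
          L Z.1 = L X.1 := by
        intro Z hZ
        simp only [hL]
        rw [hZ, hx]
      have step0 : ∑ Z ∈ Finset.univ.filter
            (fun Z : {X : Fin μ → S // ∀ i, Snon f (X i)} => best Z.1 = x),
            Qmu f M PS X Z * ε ^ (L Z.1)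
          = (∑ Z ∈ Finset.univ.filter
            (fun Z : {X : Fin μ → S // ∀ i, Snon f (X i)} => best Z.1 = x),
            Pmu M PS X.1 Z.1) * ε ^ (L X.1) := by
        rw [Finset.sum_mul]
        refine Finset.sum_congr rfl fun Z hZ => ?_
        simp only [Finset.mem_filter] at hZ
        rw [hLeq Z hZ.2]
        rfl
      rw [step0]
      refine mul_le_mul_of_nonneg_right ?_ (pow_nonneg hε0.le _)
      -- main estimate SA ≤ pm * c
      have step1 : ∑ Z ∈ Finset.univ.filter
            (fun Z : {X : Fin μ → S // ∀ i, Snon f (X i)} => best Z.1 = x),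
            Pmu M PS X.1 Z.1
          = ∑ Y : Fin μ → S, (∏ i, M (X.1 i) (Y i)) *
              ∑ Z ∈ Finset.univ.filter
                (fun Z : {X : Fin μ → S // ∀ i, Snon f (X i)} => best Z.1 = x),
                PS X.1 Y Z.1 := by
        simp only [Pmu, Matrix.of_apply]
        rw [Finset.sum_comm]
        exact Finset.sum_congr rfl fun Y _ => (Finset.mul_sum _ _ _).symm
      rw [step1]
      have step2 : ∀ Y : Fin μ → S, (∏ i, M (X.1 i) (Y i)) *
            (∑ Z ∈ Finset.univ.filter
              (fun Z : {X : Fin μ → S // ∀ i, Snon f (X i)} => best Z.1 = x),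
              PS X.1 Y Z.1)
          ≤ (∏ i, M (X.1 i) (Y i)) * (if f (best Y) ≤ f x then (1:ℝ) else 0) := by
        intro Y
        refine mul_le_mul_of_nonneg_left ?_ (Finset.prod_nonneg fun i _ => hM0 _ _)
        by_cases hY : f (best Y) ≤ f x
        · rw [if_pos hY]
          calc ∑ Z ∈ Finset.univ.filter
                (fun Z : {X : Fin μ → S // ∀ i, Snon f (X i)} => best Z.1 = x),
                PS X.1 Y Z.1
              ≤ ∑ W : Fin μ → S, PS X.1 Y W :=
                sum_finset_subtype_le' _ (PS X.1 Y) (hPS0 X.1 Y)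
            _ = 1 := hPS1 X.1 Y
        · rw [if_neg hY]
          refine le_of_eq (Finset.sum_eq_zero fun Z hZ => ?_)
          simp only [Finset.mem_filter] at hZ
          by_contra hne
          have hpos : 0 < PS X.1 Y Z.1 := lt_of_le_of_ne (hPS0 X.1 Y Z.1) (Ne.symm hne)
          have hlt : f (best X.1) < f (best Y) := by
            rw [← hx]; exact lt_of_not_ge hY
          have := (hPS_elite X.1 Y Z.1 hpos).1 hlt
          rw [hZ.2] at this
          rw [← this] at hY
          exact hY (le_refl _)
      calc ∑ Y : Fin μ → S, (∏ i, M (X.1 i) (Y i)) *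
            ∑ Z ∈ Finset.univ.filter
              (fun Z : {X : Fin μ → S // ∀ i, Snon f (X i)} => best Z.1 = x),
              PS X.1 Y Z.1
          ≤ ∑ Y : Fin μ → S, (∏ i, M (X.1 i) (Y i)) *
              (if f (best Y) ≤ f x then (1:ℝ) else 0) :=
            Finset.sum_le_sum fun Y _ => step2 Y
        _ = ∑ Y ∈ Finset.univ.filter (fun Y : Fin μ → S => f (best Y) ≤ f x),
              ∏ i, M (X.1 i) (Y i) := by
            rw [Finset.sum_filter]
            exact Finset.sum_congr rfl fun Y _ => by rw [mul_ite, mul_one, mul_zero]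
        _ = ∑ Y ∈ Fintype.piFinset
              (fun _ : Fin μ => Finset.univ.filter (fun y => f y ≤ f x)),
              ∏ i, M (X.1 i) (Y i) := by
            refine Finset.sum_congr ?_ fun _ _ => rfl
            ext Y
            simp only [Finset.mem_filter, Finset.mem_univ, true_and,
              Fintype.mem_piFinset]
            constructor
            · intro h i; exact le_trans (hbest_max Y i) h
            · intro h
              obtain ⟨i, hi⟩ := hbest_mem Y
              rw [hi]; exact h i
        _ = ∏ i, ∑ y ∈ Finset.univ.filter (fun y => f y ≤ f x), M (X.1 i) y :=
            (Finset.prod_univ_sum _ _).symm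
        _ ≤ pm * c := by
            -- product bound
            set a : Fin μ → ℝ :=
              fun i => ∑ y ∈ Finset.univ.filter (fun y => f y ≤ f x), M (X.1 i) y with ha
            have ha0 : ∀ i, 0 ≤ a i := fun i => Finset.sum_nonneg fun y _ => hM0 _ _
            have ha1 : ∀ i, a i ≤ 1 := fun i => by
              rw [ha, ← hM1 (X.1 i)]
              exact Finset.sum_le_sum_of_subset_of_nonneg (Finset.filter_subset _ _)
                fun y _ _ => hM0 _ _
            obtain ⟨i', hi'⟩ := Fintype.exists_ne_of_one_lt_card
              (by simpa using lt_of_lt_of_le one_lt_two hμ) j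
            have heq1 : ∏ i, a i = a j * ∏ i ∈ Finset.univ.erase j, a i :=
              (Finset.mul_prod_erase Finset.univ a (Finset.mem_univ j)).symm
            have hi'mem : i' ∈ Finset.univ.erase j := Finset.mem_erase.2 ⟨hi', Finset.mem_univ _⟩
            have heq2 : ∏ i ∈ Finset.univ.erase j, a i
                = a i' * ∏ i ∈ (Finset.univ.erase j).erase i', a i :=
              (Finset.mul_prod_erase _ a hi'mem).symm
            have hrest : ∏ i ∈ (Finset.univ.erase j).erase i', a i ≤ 1 :=
              Finset.prod_le_one (fun i _ => ha0 i) (fun i _ => ha1 i)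
            have hrest0 : 0 ≤ ∏ i ∈ (Finset.univ.erase j).erase i', a i :=
              Finset.prod_nonneg fun i _ => ha0 i
            have haj : a j ≤ pm := by
              show (∑ y ∈ Finset.univ.filter (fun y => f y ≤ f x), M (X.1 j) y) ≤ pm
              rw [← hj]
              exact hpmax x hxnon
            have hai' : a i' ≤ c := hlow_le_c x hxnon (X.1 i')
            calc ∏ i, a i = a j * (a i' * ∏ i ∈ (Finset.univ.erase j).erase i', a i) := by
                  rw [heq1, heq2]
              _ ≤ pm * (c * 1) := by
                  refine mul_le_mul haj ?_ ?_ hpm_pos.le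
                  · exact mul_le_mul hai' hrest hrest0 hc_nonneg
                  · exact mul_nonneg (ha0 i') hrest0
              _ = pm * c := by rw [mul_one]
    -- Part B
    have hB : ∑ Z ∈ Finset.univ.filter
          (fun Z : {X : Fin μ → S // ∀ i, Snon f (X i)} => ¬ best Z.1 = x),
          Qmu f M PS X Z * ε ^ (L Z.1) ≤ ε * ε ^ (L X.1) := by
      have step1 : ∀ Z ∈ Finset.univ.filter
            (fun Z : {X : Fin μ → S // ∀ i, Snon f (X i)} => ¬ best Z.1 = x),
            Qmu f M PS X Z * ε ^ (L Z.1)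
            ≤ Pmu M PS X.1 Z.1 * (ε ^ (L X.1) * ε) := by
        intro Z hZ
        simp only [Finset.mem_filter] at hZ
        rcases eq_or_lt_of_le (hPmu0 X.1 Z.1) with h0 | hpos
        · show Pmu M PS X.1 Z.1 * ε ^ (L Z.1) ≤ _
          rw [← h0, zero_mul, zero_mul]
        · have hfb : f x < f (best Z.1) := by
            have hsum : Pmu M PS X.1 Z.1 ≠ 0 := ne_of_gt hpos
            simp only [Pmu, Matrix.of_apply] at hsum
            obtain ⟨Y, _, hY⟩ := Finset.exists_ne_zero_of_sum_ne_zero hsum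
            have hPSne : PS X.1 Y Z.1 ≠ 0 := right_ne_zero_of_mul hY
            have hPSpos : 0 < PS X.1 Y Z.1 :=
              lt_of_le_of_ne (hPS0 X.1 Y Z.1) (Ne.symm hPSne)
            by_cases hlt : f (best X.1) < f (best Y)
            · have := (hPS_elite X.1 Y Z.1 hPSpos).1 hlt
              rw [this, hx]; exact hlt
            · have := (hPS_elite X.1 Y Z.1 hPSpos).2 hlt
              rw [← hx] at this
              exact absurd this hZ.2
          have hLlt : L X.1 < L Z.1 := by
            rw [hL]
            refine Finset.card_lt_card ?_
            rw [Finset.ssubset_iff_of_subset]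
            · exact ⟨best Z.1, by simp, by simp [not_le.2 hfb]; exact hfb⟩
            · intro y hy
              simp only [Finset.mem_filter, Finset.mem_univ, true_and] at *
              exact le_trans hy hfb.le
          have hpow : ε ^ (L Z.1) ≤ ε ^ (L X.1 + 1) :=
            pow_le_pow_of_le_one hε0.le hε1 hLlt
          show Pmu M PS X.1 Z.1 * ε ^ (L Z.1) ≤ _
          rw [← pow_succ]
          exact mul_le_mul_of_nonneg_left hpow hpos.le
      calc ∑ Z ∈ Finset.univ.filter
            (fun Z : {X : Fin μ → S // ∀ i, Snon f (X i)} => ¬ best Z.1 = x),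
            Qmu f M PS X Z * ε ^ (L Z.1)
          ≤ ∑ Z ∈ Finset.univ.filter
              (fun Z : {X : Fin μ → S // ∀ i, Snon f (X i)} => ¬ best Z.1 = x),
              Pmu M PS X.1 Z.1 * (ε ^ (L X.1) * ε) := Finset.sum_le_sum step1
        _ = (∑ Z ∈ Finset.univ.filter
              (fun Z : {X : Fin μ → S // ∀ i, Snon f (X i)} => ¬ best Z.1 = x),
              Pmu M PS X.1 Z.1) * (ε ^ (L X.1) * ε) := (Finset.sum_mul _ _ _).symm
        _ ≤ 1 * (ε ^ (L X.1) * ε) := by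
            refine mul_le_mul_of_nonneg_right ?_
              (mul_nonneg (pow_nonneg hε0.le _) hε0.le)
            calc ∑ Z ∈ Finset.univ.filter
                  (fun Z : {X : Fin μ → S // ∀ i, Snon f (X i)} => ¬ best Z.1 = x),
                  Pmu M PS X.1 Z.1
                ≤ ∑ B : Fin μ → S, Pmu M PS X.1 B :=
                  sum_finset_subtype_le' _ (Pmu M PS X.1) (hPmu0 X.1)
              _ = 1 := hPmurow X.1
        _ = ε * ε ^ (L X.1) := by ring
    calc (∑ Z ∈ Finset.univ.filter
            (fun Z : {X : Fin μ → S // ∀ i, Snon f (X i)} => best Z.1 = x),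
            Qmu f M PS X Z * ε ^ (L Z.1))
        + ∑ Z ∈ Finset.univ.filter
            (fun Z : {X : Fin μ → S // ∀ i, Snon f (X i)} => ¬ best Z.1 = x),
            Qmu f M PS X Z * ε ^ (L Z.1)
        ≤ (pm * c) * ε ^ (L X.1) + ε * ε ^ (L X.1) := add_le_add hA hB
      _ = (pm * c + ε) * ε ^ (L X.1) := by ring
      _ = θ * ε ^ (L X.1) := by rw [hθsplit]
  have hup : specRad (Qmu f M PS) ≤ θ :=
    specRad_le' (Qmu f M PS) (fun A B => hPmu0 A.1 B.1)
      (fun X => ε ^ (L X.1)) (fun X => pow_pos hε0 _) θ hθ0 hrowμ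
  calc specRad (Qmu f M PS) ≤ θ := hup
    _ < pm := hθ_lt
    _ ≤ specRad (Q1 f M) := hlow
end

section
/- Let Q¹ and Q^μ be nonnegative real square matrices (of possibly different sizes, both nonempty) representing the transient transition submatrices of a (1+1) EA and of a (μ+μ) EA (μ ≥ 2) respectively, and assume 0 < 1 − μ(1 − ρ(Q¹)). Then superlinear ρ-scalability holds, i.e. 1 − ρ(Q^μ) > μ(1 − ρ(Q¹)), if and only if there exists an integer k ≥ 1 such that for every index X, the X-th row sum of (Q^μ)^k satisfies ∑_Y ((Q^μ)^k)(X,Y) < (1 − μ(1 − ρ(Q¹)))^k; equivalently, the probability of reaching the optimal set within k generations from every non-optimal state X exceeds 1 − (1 − μ(1 − ρ(Q¹)))^k. -/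
open Matrix

section aux

attribute [local instance] Matrix.linftyOpNormedRing Matrix.linftyOpNormedAlgebra

variable {m : ℕ}

noncomputable instance : CompleteSpace (Matrix (Fin m) (Fin m) ℂ) :=
  (inferInstance : CompleteSpace (Fin m → Fin m → ℂ))

lemma mapC_pow (Q : Matrix (Fin m) (Fin m) ℝ) (k : ℕ) :
    (Q ^ k).map Complex.ofReal = (Q.map Complex.ofReal) ^ k := by
  induction k with
  | zero => simp [Matrix.map_one]
  | succ k ih =>
    rw [pow_succ, pow_succ, ← ih]
    ext i j
    simp [Matrix.mul_apply, Matrix.map_apply]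

lemma pow_nonneg_entries (Q : Matrix (Fin m) (Fin m) ℝ) (hQ : ∀ i j, 0 ≤ Q i j) (k : ℕ) :
    ∀ i j, 0 ≤ (Q ^ k) i j := by
  induction k with
  | zero => intro i j; by_cases h : i = j <;> simp [pow_zero, Matrix.one_apply, h]
  | succ k ih =>
    intro i j
    rw [pow_succ, Matrix.mul_apply]
    exact Finset.sum_nonneg fun l _ => mul_nonneg (ih i l) (hQ l j)

lemma rowsum_eq (Q : Matrix (Fin m) (Fin m) ℝ) (hQ : ∀ i j, 0 ≤ Q i j) (k : ℕ) (X : Fin m) :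
    ((∑ Y, ‖((Q ^ k).map Complex.ofReal) X Y‖₊ : NNReal) : ℝ) = ∑ Y, (Q ^ k) X Y := by
  push_cast
  refine Finset.sum_congr rfl fun Y _ => ?_
  simp [Matrix.map_apply, Complex.norm_real, coe_nnnorm,
    abs_of_nonneg (pow_nonneg_entries Q hQ k X Y)]

lemma key (hm : 1 ≤ m) (Q : Matrix (Fin m) (Fin m) ℝ) (hQ : ∀ i j, 0 ≤ Q i j)
    {r : ℝ} (hr : 0 < r) :
    specRad Q < r ↔ ∃ k : ℕ, 1 ≤ k ∧ ∀ X : Fin m, ∑ Y, (Q ^ k) X Y < r ^ k := by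
  have hne : Nonempty (Fin m) := ⟨⟨0, hm⟩⟩
  have : Nontrivial (Matrix (Fin m) (Fin m) ℂ) := inferInstance
  set A : Matrix (Fin m) (Fin m) ℂ := Q.map Complex.ofReal with hA
  have hspec : (spectrum ℂ A).Nonempty := spectrum.nonempty A
  have hScomp : IsCompact ((fun z => ‖z‖) '' spectrum ℂ A) :=
    (spectrum.isCompact A).image continuous_norm
  have hSne : ((fun z => ‖z‖) '' spectrum ℂ A).Nonempty := hspec.image _
  have hmem : specRad Q ∈ (fun z => ‖z‖) '' spectrum ℂ A := hScomp.sSup_mem hSne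
  have hub : ∀ z ∈ spectrum ℂ A, ‖z‖ ≤ specRad Q := fun z hz =>
    le_csSup hScomp.bddAbove ⟨z, hz, rfl⟩
  constructor
  · intro h
    -- Gelfand's formula
    have hρ : spectralRadius ℂ A < (r.toNNReal : ENNReal) := by
      apply spectrum.spectralRadius_lt_of_forall_lt_of_nonempty hspec
      intro z hz
      rw [← NNReal.coe_lt_coe, coe_nnnorm, Real.coe_toNNReal _ hr.le]
      exact lt_of_le_of_lt (hub z hz) h
    have hT := spectrum.pow_nnnorm_pow_one_div_tendsto_nhds_spectralRadius A
    have hev : ∀ᶠ k : ℕ in Filter.atTop,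
        ((‖A ^ k‖₊ : ENNReal) ^ (1 / (k : ℝ))) < (r.toNNReal : ENNReal) :=
      hT.eventually_lt_const hρ
    obtain ⟨k, hklt, hk1⟩ := (hev.and (Filter.eventually_ge_atTop 1)).exists
    refine ⟨k, hk1, fun X => ?_⟩
    have hk0 : (k : ℝ) ≠ 0 := by exact_mod_cast Nat.one_le_iff_ne_zero.mp hk1
    have hnn : ‖A ^ k‖₊ < r.toNNReal ^ k := by
      have h2 := ENNReal.rpow_lt_rpow hklt (by positivity : (0:ℝ) < (k : ℝ))
      rw [← ENNReal.rpow_mul, one_div, inv_mul_cancel₀ hk0, ENNReal.rpow_one,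
        ENNReal.rpow_natCast, ← ENNReal.coe_pow, ENNReal.coe_lt_coe] at h2
      exact h2
    have hnorm : ‖A ^ k‖ < r ^ k := by
      have := (NNReal.coe_lt_coe).mpr hnn
      rw [coe_nnnorm] at this
      rwa [NNReal.coe_pow, Real.coe_toNNReal _ hr.le] at this
    refine lt_of_le_of_lt ?_ hnorm
    rw [← rowsum_eq Q hQ k X, hA, ← mapC_pow, Matrix.linfty_opNorm_def]
    exact NNReal.coe_le_coe.mpr (Finset.le_sup
      (f := fun i => ∑ j, ‖((Q ^ k).map Complex.ofReal) i j‖₊) (Finset.mem_univ X))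
  · rintro ⟨k, hk1, hk⟩
    -- the norm of A^k is small
    have hnorm : ‖A ^ k‖ < r ^ k := by
      rw [hA, ← mapC_pow, Matrix.linfty_opNorm_def]
      rw [← Real.coe_toNNReal (r ^ k) (by positivity), NNReal.coe_lt_coe]
      apply Finset.sup_lt_iff (by simp [Real.toNNReal_pos.mpr (by positivity : (0:ℝ) < r ^ k)] : (⊥ : NNReal) < (r ^ k).toNNReal) |>.mpr
      intro X _
      rw [← NNReal.coe_lt_coe, rowsum_eq Q hQ k X, Real.coe_toNNReal _ (by positivity)]
      exact hk X
    obtain ⟨z, hz, hzρ⟩ := hmem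
    have hzk : z ^ k ∈ spectrum ℂ (A ^ k) := by
      have := spectrum.subset_polynomial_aeval A (Polynomial.X ^ k : Polynomial ℂ)
      simpa using this ⟨z, hz, by simp⟩
    have hle := spectrum.norm_le_norm_of_mem hzk
    rw [norm_pow] at hle
    have hzlt : ‖z‖ ^ k < r ^ k := lt_of_le_of_lt hle hnorm
    have : ‖z‖ < r := lt_of_pow_lt_pow_left₀ k hr.le hzlt
    exact hzρ.symm.trans_lt this

end aux

/-- let `Q¹` and `Qμ` be nonnegative transient transition submatrices of a
`(1+1)` EA and of a `(μ+μ)` EA (`μ ≥ 2`), with `0 < 1 - μ(1 - ρ(Q¹))`.  Superlinear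
ρ-scalability `1 - ρ(Qμ) > μ(1 - ρ(Q¹))` holds if and only if there is some `k ≥ 1`
such that every row sum of `Qμ^k` (the probability of staying non-optimal for `k`
generations) is less than `(1 - μ(1 - ρ(Q¹)))^k`. -/
theorem stmt_9 (n m μ : ℕ) (hn : 1 ≤ n) (hm : 1 ≤ m) (hμ : 2 ≤ μ)
    (Q1 : Matrix (Fin n) (Fin n) ℝ) (hQ1 : ∀ i j, 0 ≤ Q1 i j)
    (Qmu : Matrix (Fin m) (Fin m) ℝ) (hQmu : ∀ i j, 0 ≤ Qmu i j)
    (hpos : 0 < 1 - (μ : ℝ) * (1 - specRad Q1)) :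
    (1 - specRad Qmu > (μ : ℝ) * (1 - specRad Q1)) ↔
      ∃ k : ℕ, 1 ≤ k ∧ ∀ X : Fin m,
        ∑ Y, (Qmu ^ k) X Y < (1 - (μ : ℝ) * (1 - specRad Q1)) ^ k := by
  have h := key hm Qmu hQmu hpos
  constructor
  · intro hgt; exact h.mp (by linarith)
  · intro hex; have := h.mpr hex; linarith
end

section
/- Consider the (1+1) elitist EA and a (μ+μ) elitist EA with μ ≥ 2 using the same mutation operator M on the same fitness function f, as in the model below, with S_non nonempty. Let x_ρ ∈ S_non maximize P¹(x,x) over x ∈ S_non. Suppose that for every population Z ∈ S^μ_same(x_ρ) containing no bridgeable point of x_ρ, the one-step transition probability of the (μ+μ) EA from Z into the set S^μ_bridge(x_ρ) of populations containing a bridgeable point of x_ρ is zero (so no road from X_ρ = (x_ρ,…,x_ρ) to S^μ_high(x_ρ) passes through a bridge). Then no superlinear ρ-scalability takes place for this μ: 1 − ρ(Q^μ) ≤ μ(1 − P¹(x_ρ,x_ρ)) = μ(1 − ρ(Q¹)). -/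
open Matrix

variable {S : Type*} [Fintype S] [LinearOrder S]

/-- `Mhigh f M x y` is the probability `M(y, S¹_high(x))` that `y` mutates into the
set of individuals strictly fitter than `x`. -/
noncomputable abbrev Mhigh (f : S → ℝ) (M : Matrix S S ℝ) (x y : S) : ℝ :=
  ∑ z ∈ Finset.univ.filter (fun z => f x < f z), M y z

/-- `y` is a bridgeable point of `x`: `y ≠ x`, `f y ≤ f x`, and `y` is at least as
likely as `x` to mutate into `S¹_high(x)`. -/
abbrev Bridgeable (f : S → ℝ) (M : Matrix S S ℝ) (x y : S) : Prop :=
  y ≠ x ∧ f y ≤ f x ∧ Mhigh f M x x ≤ Mhigh f M x y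

section AuxGeneral
variable {n : Type*} [Fintype n] [DecidableEq n]

lemma aux_bddAbove (A : Matrix n n ℝ) :
    BddAbove ((fun z => ‖z‖) '' spectrum ℂ (A.map Complex.ofReal)) :=
  (((A.map Complex.ofReal).finite_spectrum).image _).bddAbove

lemma aux_specRad_nonneg (A : Matrix n n ℝ) : 0 ≤ specRad A :=
  Real.sSup_nonneg (by rintro x ⟨z, _, rfl⟩; exact norm_nonneg z)

lemma aux_pow_entries_nonneg (A : Matrix n n ℝ) (hA : ∀ i j, 0 ≤ A i j) (k : ℕ) :
    ∀ i j, 0 ≤ (A ^ k) i j := by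
  induction k with
  | zero =>
    intro i j; rw [pow_zero]
    by_cases h : i = j <;> simp [Matrix.one_apply, h]
  | succ k ih =>
    intro i j; rw [pow_succ, Matrix.mul_apply]
    exact Finset.sum_nonneg fun l _ => mul_nonneg (ih i l) (hA l j)

lemma aux_map_pow (A : Matrix n n ℝ) (k : ℕ) :
    (A.map Complex.ofReal) ^ k = (A ^ k).map Complex.ofReal := by
  exact (map_pow (RingHom.mapMatrix Complex.ofRealHom : Matrix n n ℝ →+* Matrix n n ℂ) A k).symm

lemma aux_one_sub_sum_le_prod {ι : Type*} (s : Finset ι) (a : ι → ℝ)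
    (h0 : ∀ i ∈ s, 0 ≤ a i) (h1 : ∀ i ∈ s, a i ≤ 1) :
    1 - ∑ i ∈ s, (1 - a i) ≤ ∏ i ∈ s, a i := by
  classical
  induction s using Finset.induction with
  | empty => simp
  | insert x s hx ih =>
    rw [Finset.sum_insert hx, Finset.prod_insert hx]
    have hT : 0 ≤ ∑ i ∈ s, (1 - a i) :=
      Finset.sum_nonneg fun i hi => by linarith [h1 i (Finset.mem_insert_of_mem hi)]
    have ihs := ih (fun i hi => h0 i (Finset.mem_insert_of_mem hi))
      (fun i hi => h1 i (Finset.mem_insert_of_mem hi))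
    have hx0 := h0 x (Finset.mem_insert_self x s)
    have hx1 := h1 x (Finset.mem_insert_self x s)
    nlinarith [mul_le_mul_of_nonneg_left ihs hx0]

end AuxGeneral

section AuxSpec
attribute [local instance] Matrix.linftyOpNormedRing Matrix.linftyOpNormedAlgebra

open Filter ENNReal NNReal in
lemma aux_specRad_ge {n : Type*} [Fintype n] [DecidableEq n] (A : Matrix n n ℝ) (c : ℝ)
    (hc : 0 < c) (h : ∀ k : ℕ, ∃ i : n, c ^ k ≤ ∑ j, |(A ^ k) i j|) : c ≤ specRad A := by
  by_contra hlt
  push_neg at hlt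
  haveI : CompleteSpace (Matrix n n ℂ) :=
    inferInstance
  set Ac := A.map Complex.ofReal with hAc
  have hb : ∀ z ∈ spectrum ℂ Ac, ‖z‖ ≤ specRad A := fun z hz =>
    le_csSup (aux_bddAbove A) ⟨z, hz, rfl⟩
  have hsr : spectralRadius ℂ Ac ≤ ENNReal.ofReal (specRad A) := by
    rw [spectralRadius]
    refine iSup₂_le fun z hz => ?_
    rw [ENNReal.ofReal, ← norm_toNNReal]
    exact ENNReal.coe_le_coe.mpr (Real.toNNReal_mono (hb z hz))
  have hcc : spectralRadius ℂ Ac < ENNReal.ofReal c :=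
    lt_of_le_of_lt hsr ((ENNReal.ofReal_lt_ofReal_iff hc).mpr hlt)
  have hlim := spectrum.pow_nnnorm_pow_one_div_tendsto_nhds_spectralRadius Ac
  have hev : ∀ᶠ k : ℕ in atTop, ((‖Ac ^ k‖₊ : ℝ≥0∞) ^ (1 / (k : ℝ))) < ENNReal.ofReal c :=
    hlim.eventually_lt_const hcc
  obtain ⟨k, hk, hk1⟩ := (hev.and (eventually_ge_atTop 1)).exists
  obtain ⟨i, hi⟩ := h k
  -- real lower bound on the norm
  have hnorm : c ^ k ≤ ‖Ac ^ k‖ := by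
    have he : ∀ j, (Ac ^ k) i j = Complex.ofReal ((A ^ k) i j) := by
      intro j; rw [aux_map_pow]; rfl
    have h1 : c ^ k ≤ ∑ j, ‖(Ac ^ k) i j‖ := by
      refine hi.trans (le_of_eq ?_)
      refine Finset.sum_congr rfl fun j _ => ?_
      rw [he j, Complex.norm_real, Real.norm_eq_abs]
    refine h1.trans ?_
    rw [Matrix.linfty_opNorm_def]
    have h2 : (∑ j, ‖(Ac ^ k) i j‖₊) ≤ (Finset.univ : Finset n).sup fun i => ∑ j, ‖(Ac ^ k) i j‖₊ :=
      Finset.le_sup (f := fun i => ∑ j, ‖(Ac ^ k) i j‖₊) (Finset.mem_univ i)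
    calc ∑ j, ‖(Ac ^ k) i j‖ = ((∑ j, ‖(Ac ^ k) i j‖₊ : ℝ≥0) : ℝ) := by
          push_cast; rfl
      _ ≤ _ := NNReal.coe_le_coe.mpr h2
  have hlow : (ENNReal.ofReal c) ^ k ≤ (‖Ac ^ k‖₊ : ℝ≥0∞) := by
    rw [← ENNReal.ofReal_pow hc.le, ← ENNReal.ofReal_coe_nnreal, coe_nnnorm]
    exact ENNReal.ofReal_le_ofReal hnorm
  have hup : (‖Ac ^ k‖₊ : ℝ≥0∞) < (ENNReal.ofReal c) ^ k := by
    have hkpos : (0 : ℝ) < (k : ℝ) := by exact_mod_cast hk1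
    have := ENNReal.rpow_lt_rpow hk hkpos
    rw [← ENNReal.rpow_natCast (ENNReal.ofReal c) k]
    calc (‖Ac ^ k‖₊ : ℝ≥0∞) = ((‖Ac ^ k‖₊ : ℝ≥0∞) ^ (1 / (k:ℝ))) ^ (k : ℝ) := by
          rw [← ENNReal.rpow_mul, one_div_mul_cancel (ne_of_gt hkpos), ENNReal.rpow_one]
      _ < _ := this
  exact absurd (hlow.trans_lt hup) (lt_irrefl _)

end AuxSpec

lemma aux_det_triangular {n : Type*} [Fintype n] [DecidableEq n] [LinearOrder n]
    (g : n → ℝ) (A : Matrix n n ℂ)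
    (h : ∀ a b : n, (g b < g a ∨ (g b = g a ∧ b < a)) → A a b = 0) :
    A.det = ∏ i, A i i := by
  classical
  let r : n → n → Prop := fun x y => g x < g y ∨ (g x = g y ∧ x ≤ y)
  haveI : DecidableRel r := fun x y => by unfold r; infer_instance
  haveI : IsTrans n r := ⟨by
    rintro a b c (hab | ⟨hab, hab'⟩) (hbc | ⟨hbc, hbc'⟩)
    · exact Or.inl (hab.trans hbc)
    · exact Or.inl (by rw [← hbc]; exact hab)
    · exact Or.inl (by rw [hab]; exact hbc)
    · exact Or.inr ⟨hab.trans hbc, hab'.trans hbc'⟩⟩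
  haveI : IsAntisymm n r := ⟨by
    rintro a b (hab | ⟨hab, hab'⟩) (hba | ⟨hba, hba'⟩)
    · exact absurd (hab.trans hba) (lt_irrefl _)
    · exact absurd hab (by rw [hba]; exact lt_irrefl _)
    · exact absurd hba (by rw [hab]; exact lt_irrefl _)
    · exact le_antisymm hab' hba'⟩
  haveI : IsTotal n r := ⟨by
    intro a b
    rcases lt_trichotomy (g a) (g b) with hlt | heq | hgt
    · exact Or.inl (Or.inl hlt)
    · rcases le_total a b with hle | hle
      · exact Or.inl (Or.inr ⟨heq, hle⟩)
      · exact Or.inr (Or.inr ⟨heq.symm, hle⟩)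
    · exact Or.inr (Or.inl hgt)⟩
  let l := Finset.univ.sort r
  have hnd : l.Nodup := Finset.sort_nodup _ r
  have hinj : Function.Injective l.get := List.nodup_iff_injective_get.mp hnd
  have hsurj : Function.Surjective l.get := by
    intro x
    have hx : x ∈ l := (Finset.mem_sort r).mpr (Finset.mem_univ x)
    obtain ⟨i, hi⟩ := List.get_of_mem hx
    exact ⟨i, hi⟩
  let e : Fin l.length ≃ n := Equiv.ofBijective l.get ⟨hinj, hsurj⟩
  have hs : l.Pairwise r := Finset.pairwise_sort _ r
  have htri : (A.submatrix e e).BlockTriangular id := by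
    intro i j hij
    have hr : r (l.get j) (l.get i) := hs.rel_get_of_lt hij
    have hne : l.get j ≠ l.get i := hinj.ne (ne_of_lt hij)
    have : g (e j) < g (e i) ∨ (g (e j) = g (e i) ∧ e j < e i) := by
      rcases hr with h' | ⟨h1, h2⟩
      · exact Or.inl h'
      · exact Or.inr ⟨h1, lt_of_le_of_ne h2 hne⟩
    exact h (e i) (e j) this
  calc A.det = (A.submatrix e e).det := (Matrix.det_submatrix_equiv_self e A).symm
    _ = ∏ i, (A.submatrix e e) i i := Matrix.det_of_upperTriangular htri
    _ = ∏ x, A x x := Equiv.prod_comp e fun x => A x x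


lemma aux_Q1_specRad (f : S → ℝ) (M : Matrix S S ℝ) (hM0 : ∀ x y, 0 ≤ M x y)
    (xρ : S) (hxρ : Snon f xρ)
    (hxρmax : ∀ x, Snon f x → P1 f M x x ≤ P1 f M xρ xρ) :
    specRad (Q1 f M) = P1 f M xρ xρ := by
  have hdiag : ∀ x : S, P1 f M x x
      = ∑ y ∈ Finset.univ.filter (fun y => f y ≤ f x), M x y := by
    intro x; simp [P1]
  have hdiag0 : ∀ x : S, 0 ≤ P1 f M x x := by
    intro x; rw [hdiag]; exact Finset.sum_nonneg fun y _ => hM0 x y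
  have hspec : spectrum ℂ ((Q1 f M).map Complex.ofReal)
      = Set.range (fun a : {x : S // Snon f x} => ((P1 f M a.1 a.1 : ℝ) : ℂ)) := by
    ext z
    rw [spectrum.mem_iff, Matrix.isUnit_iff_isUnit_det, isUnit_iff_ne_zero, not_not]
    have hdet : (algebraMap ℂ (Matrix {x : S // Snon f x} {x : S // Snon f x} ℂ) z
        - (Q1 f M).map Complex.ofReal).det
        = ∏ a : {x : S // Snon f x}, (z - ((P1 f M a.1 a.1 : ℝ) : ℂ)) := by
      rw [aux_det_triangular (fun a => f a.1)]
      · refine Finset.prod_congr rfl fun a _ => ?_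
        simp [Matrix.sub_apply, Matrix.algebraMap_matrix_apply, Matrix.map_apply, Q1]
      · intro a b hab
        have hne : b ≠ a := by
          rcases hab with h1 | ⟨h1, h2⟩
          · intro h; rw [h] at h1; exact lt_irrefl _ h1
          · exact ne_of_lt h2
        have hnlt : ¬ f a.1 < f b.1 := by
          rcases hab with h1 | ⟨h1, h2⟩
          · exact not_lt.mpr (le_of_lt h1)
          · exact not_lt.mpr (le_of_eq h1)
        have hP0 : P1 f M a.1 b.1 = 0 := by
          simp only [P1, Matrix.of_apply, if_neg hnlt,
            if_neg (fun h : b.1 = a.1 => hne (Subtype.ext h))]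
        simp [Matrix.sub_apply, Matrix.algebraMap_matrix_apply, Matrix.map_apply, Q1, hP0,
          if_neg (Ne.symm hne)]
    rw [hdet, Finset.prod_eq_zero_iff]
    constructor
    · rintro ⟨a, -, ha⟩; exact ⟨a, (sub_eq_zero.mp ha).symm⟩
    · rintro ⟨a, ha⟩; exact ⟨a, Finset.mem_univ _, by rw [← ha, sub_self]⟩
  have himg : (fun z => ‖z‖) '' spectrum ℂ ((Q1 f M).map Complex.ofReal)
      = Set.range (fun a : {x : S // Snon f x} => P1 f M a.1 a.1) := by
    rw [hspec, ← Set.range_comp]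
    refine congrArg Set.range (funext fun a => ?_)
    simp only [Function.comp_apply, Complex.norm_real, Real.norm_eq_abs]
    exact abs_of_nonneg (hdiag0 a.1)
  rw [specRad, himg]
  exact IsGreatest.csSup_eq ⟨⟨⟨xρ, hxρ⟩, rfl⟩, by rintro y ⟨a, rfl⟩; exact hxρmax a.1 a.2⟩


theorem stmt_11_core (f : S → ℝ) (M : Matrix S S ℝ)
    (hM0 : ∀ x y, 0 ≤ M x y) (hM1 : ∀ x, ∑ y, M x y = 1)
    (μ : ℕ) (hμ : 2 ≤ μ)
    (best : (Fin μ → S) → S)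
    (hbest_mem : ∀ X, ∃ i, best X = X i)
    (hbest_max : ∀ X i, f (X i) ≤ f (best X))
    (hbest_tie : ∀ X i, f (X i) = f (best X) → X i ≤ best X)
    (PS : (Fin μ → S) → (Fin μ → S) → (Fin μ → S) → ℝ)
    (hPS0 : ∀ X Y Z, 0 ≤ PS X Y Z)
    (hPS1 : ∀ X Y, ∑ Z : Fin μ → S, PS X Y Z = 1)
    (hPS_src : ∀ X Y Z, 0 < PS X Y Z → ∀ i, (∃ j, Z i = X j) ∨ (∃ j, Z i = Y j))
    (hPS_elite : ∀ X Y Z, 0 < PS X Y Z →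
      (f (best X) < f (best Y) → best Z = best Y) ∧
      (¬ f (best X) < f (best Y) → best Z = best X))
    (hSnon : ∃ x : S, Snon f x)
    (xρ : S) (hxρ : Snon f xρ)
    (hxρmax : ∀ x, Snon f x → P1 f M x x ≤ P1 f M xρ xρ)
    (hnobridge : ∀ Z : Fin μ → S, (∀ i, Snon f (Z i)) → best Z = xρ →
      (¬ ∃ i, Bridgeable f M xρ (Z i)) →
      ∑ W ∈ Finset.univ.filter (fun W : Fin μ → S => ∃ i, Bridgeable f M xρ (W i)),
        Pmu M PS Z W = 0) :
    ∀ Z : Fin μ → S, (∀ i, Snon f (Z i)) → best Z = xρ →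
      (¬ ∃ i, Bridgeable f M xρ (Z i)) →
      1 - (μ : ℝ) * (1 - P1 f M xρ xρ)
        ≤ ∑ W ∈ Finset.univ.filter (fun W : Fin μ → S =>
            (∀ i, Snon f (W i)) ∧ best W = xρ ∧ ¬ ∃ i, Bridgeable f M xρ (W i)),
            Pmu M PS Z W := by
  intro Z hZnon hZbest hZnb
  set p := P1 f M xρ xρ with hp
  have hdiag : ∀ x : S, P1 f M x x
      = ∑ y ∈ Finset.univ.filter (fun y => f y ≤ f x), M x y := by
    intro x; simp [P1]
  obtain ⟨y0, hy0⟩ : ∃ y0, f xρ < f y0 := by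
    by_contra h; push_neg at h; exact hxρ h
  have hsplit : ∀ x : S, ∑ y ∈ Finset.univ.filter (fun y => f y ≤ f xρ), M x y
      = 1 - Mhigh f M xρ x := by
    intro x
    have h2 : ∑ y ∈ Finset.univ.filter (fun y => f y ≤ f xρ), M x y
        + ∑ y ∈ Finset.univ.filter (fun y => ¬ f y ≤ f xρ), M x y = ∑ y, M x y :=
      Finset.sum_filter_add_sum_filter_not _ _ _
    have h3 : Finset.univ.filter (fun y => ¬ f y ≤ f xρ)
        = Finset.univ.filter (fun y => f xρ < f y) := by
      apply Finset.filter_congr; intro y _; simp [not_le]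
    rw [h3, hM1 x] at h2
    simp only [Mhigh]; linarith
  have hMhigh_xρ : Mhigh f M xρ xρ = 1 - p := by
    have h1 := hsplit xρ
    rw [hp, hdiag xρ]; linarith
  have hfact3 : ∀ z : S, f z ≤ f xρ → ¬ Bridgeable f M xρ z → Mhigh f M xρ z ≤ 1 - p := by
    intro z hfz hnb
    by_cases hz : z = xρ
    · rw [hz, hMhigh_xρ]
    · simp only [Bridgeable, not_and, not_le] at hnb
      linarith [hnb hz hfz]
  set Aset : Finset (Fin μ → S) := Finset.univ.filter (fun W : Fin μ → S =>
      (∀ i, Snon f (W i)) ∧ best W = xρ ∧ ¬ ∃ i, Bridgeable f M xρ (W i)) with hAset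
  set L : Finset (Fin μ → S) :=
    Finset.univ.filter (fun Y : Fin μ → S => ∀ i, f (Y i) ≤ f xρ) with hL
  set Br : Finset (Fin μ → S) :=
    Finset.univ.filter (fun W : Fin μ → S => ∃ i, Bridgeable f M xρ (W i)) with hBr
  have hclaim : ∀ Y ∈ L, ∀ W, W ∉ Br → 0 < PS Z Y W → W ∈ Aset := by
    intro Y hY W hWBr hpos
    rw [hL, Finset.mem_filter] at hY
    have hWnb : ¬ ∃ i, Bridgeable f M xρ (W i) := by
      intro hex
      exact hWBr (by rw [hBr, Finset.mem_filter]; exact ⟨Finset.mem_univ _, hex⟩)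
    have hfW : ∀ i, f (W i) ≤ f xρ := by
      intro i
      rcases hPS_src Z Y W hpos i with ⟨j, hj⟩ | ⟨j, hj⟩
      · rw [hj]
        calc f (Z j) ≤ f (best Z) := hbest_max Z j
          _ = f xρ := by rw [hZbest]
      · rw [hj]; exact hY.2 j
    have hWnon : ∀ i, Snon f (W i) := by
      intro i hopt
      have h1 := hopt y0
      have h2 := hfW i
      linarith
    have hbw : best W = xρ := by
      obtain ⟨j, hj⟩ := hbest_mem Y
      have hnlt : ¬ f (best Z) < f (best Y) := by
        rw [hZbest, hj]
        exact not_lt.mpr (hY.2 j)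
      rw [← hZbest]
      exact (hPS_elite Z Y W hpos).2 hnlt
    rw [hAset, Finset.mem_filter]
    exact ⟨Finset.mem_univ _, hWnon, hbw, hWnb⟩
  have hinner : ∀ Y ∈ L, 1 - ∑ W ∈ Br, PS Z Y W ≤ ∑ W ∈ Aset, PS Z Y W := by
    intro Y hY
    have hsplit2 : ∑ W ∈ Finset.univ.filter (fun W => W ∈ Aset), PS Z Y W
        + ∑ W ∈ Finset.univ.filter (fun W => W ∉ Aset), PS Z Y W = 1 := by
      rw [Finset.sum_filter_add_sum_filter_not, hPS1]
    have hAeq : Finset.univ.filter (fun W => W ∈ Aset) = Aset := by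
      ext W; simp
    rw [hAeq] at hsplit2
    have hzero : ∀ W ∈ Finset.univ.filter (fun W => W ∉ Aset), W ∉ Br → PS Z Y W = 0 := by
      intro W hW hWBr
      by_contra h0
      exact (Finset.mem_filter.mp hW).2
        (hclaim Y hY W hWBr (lt_of_le_of_ne (hPS0 Z Y W) (Ne.symm h0)))
    have e1 : ∑ W ∈ (Finset.univ.filter (fun W => W ∉ Aset)).filter (fun W => W ∈ Br), PS Z Y W
        = ∑ W ∈ Finset.univ.filter (fun W => W ∉ Aset), PS Z Y W := by
      apply Finset.sum_filter_of_ne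
      intro W hW h0
      by_contra hWBr
      exact h0 (hzero W hW hWBr)
    have e2 : ∑ W ∈ (Finset.univ.filter (fun W => W ∉ Aset)).filter (fun W => W ∈ Br), PS Z Y W
        ≤ ∑ W ∈ Br, PS Z Y W := by
      apply Finset.sum_le_sum_of_subset_of_nonneg
      · intro W hW; exact (Finset.mem_filter.mp hW).2
      · intro W _ _; exact hPS0 Z Y W
    linarith
  have hswapA : ∑ W ∈ Aset, Pmu M PS Z W
      = ∑ Y : Fin μ → S, (∏ i, M (Z i) (Y i)) * ∑ W ∈ Aset, PS Z Y W := by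
    simp only [Pmu, Matrix.of_apply]
    rw [Finset.sum_comm]
    simp_rw [← Finset.mul_sum]
  have hswapB : ∑ W ∈ Br, Pmu M PS Z W
      = ∑ Y : Fin μ → S, (∏ i, M (Z i) (Y i)) * ∑ W ∈ Br, PS Z Y W := by
    simp only [Pmu, Matrix.of_apply]
    rw [Finset.sum_comm]
    simp_rw [← Finset.mul_sum]
  have hbr0 : ∑ Y : Fin μ → S, (∏ i, M (Z i) (Y i)) * ∑ W ∈ Br, PS Z Y W = 0 := by
    rw [← hswapB, hBr]
    exact hnobridge Z hZnon hZbest hZnb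
  have hg0 : ∀ Y : Fin μ → S, 0 ≤ ∏ i, M (Z i) (Y i) :=
    fun Y => Finset.prod_nonneg fun i _ => hM0 _ _
  have hSA0 : ∀ Y : Fin μ → S, 0 ≤ ∑ W ∈ Aset, PS Z Y W :=
    fun Y => Finset.sum_nonneg fun W _ => hPS0 Z Y W
  have hSB0 : ∀ Y : Fin μ → S, 0 ≤ ∑ W ∈ Br, PS Z Y W :=
    fun Y => Finset.sum_nonneg fun W _ => hPS0 Z Y W
  -- step 1: restrict the outer sum to L
  have step1 : ∑ Y ∈ L, (∏ i, M (Z i) (Y i)) * ∑ W ∈ Aset, PS Z Y W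
      ≤ ∑ Y : Fin μ → S, (∏ i, M (Z i) (Y i)) * ∑ W ∈ Aset, PS Z Y W :=
    Finset.sum_le_sum_of_subset_of_nonneg (Finset.subset_univ _)
      fun Y _ _ => mul_nonneg (hg0 Y) (hSA0 Y)
  -- step 2: per-Y lower bound on L
  have step2 : ∑ Y ∈ L, (∏ i, M (Z i) (Y i)) * (1 - ∑ W ∈ Br, PS Z Y W)
      ≤ ∑ Y ∈ L, (∏ i, M (Z i) (Y i)) * ∑ W ∈ Aset, PS Z Y W :=
    Finset.sum_le_sum fun Y hY =>
      mul_le_mul_of_nonneg_left (hinner Y hY) (hg0 Y)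
  -- step 3: expand
  have step3 : ∑ Y ∈ L, (∏ i, M (Z i) (Y i)) * (1 - ∑ W ∈ Br, PS Z Y W)
      = ∑ Y ∈ L, (∏ i, M (Z i) (Y i))
        - ∑ Y ∈ L, (∏ i, M (Z i) (Y i)) * ∑ W ∈ Br, PS Z Y W := by
    rw [← Finset.sum_sub_distrib]
    refine Finset.sum_congr rfl fun Y _ => by ring
  have step4 : ∑ Y ∈ L, (∏ i, M (Z i) (Y i)) * ∑ W ∈ Br, PS Z Y W
      ≤ ∑ Y : Fin μ → S, (∏ i, M (Z i) (Y i)) * ∑ W ∈ Br, PS Z Y W :=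
    Finset.sum_le_sum_of_subset_of_nonneg (Finset.subset_univ _)
      fun Y _ _ => mul_nonneg (hg0 Y) (hSB0 Y)
  -- the product formula
  have hLpi : L = Fintype.piFinset
      (fun _ : Fin μ => Finset.univ.filter (fun y => f y ≤ f xρ)) := by
    ext Y
    simp [hL, Fintype.mem_piFinset]
  have hprod : ∑ Y ∈ L, (∏ i, M (Z i) (Y i))
      = ∏ i, ∑ y ∈ Finset.univ.filter (fun y => f y ≤ f xρ), M (Z i) y := by
    rw [hLpi]
    exact (Finset.prod_univ_sum _ _).symm
  -- bound the product from below
  have hfz : ∀ i, f (Z i) ≤ f xρ := by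
    intro i
    calc f (Z i) ≤ f (best Z) := hbest_max Z i
      _ = f xρ := by rw [hZbest]
  have hznb : ∀ i, ¬ Bridgeable f M xρ (Z i) := fun i hb => hZnb ⟨i, hb⟩
  have ha0 : ∀ i : Fin μ, 0 ≤ ∑ y ∈ Finset.univ.filter (fun y => f y ≤ f xρ), M (Z i) y :=
    fun i => Finset.sum_nonneg fun y _ => hM0 _ _
  have ha1 : ∀ i : Fin μ, ∑ y ∈ Finset.univ.filter (fun y => f y ≤ f xρ), M (Z i) y ≤ 1 := by
    intro i
    rw [hsplit (Z i)]
    have : 0 ≤ Mhigh f M xρ (Z i) := Finset.sum_nonneg fun y _ => hM0 _ _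
    linarith
  have hprodlb : 1 - (μ : ℝ) * (1 - p)
      ≤ ∏ i, ∑ y ∈ Finset.univ.filter (fun y => f y ≤ f xρ), M (Z i) y := by
    have h1 := aux_one_sub_sum_le_prod Finset.univ
      (fun i : Fin μ => ∑ y ∈ Finset.univ.filter (fun y => f y ≤ f xρ), M (Z i) y)
      (fun i _ => ha0 i) (fun i _ => ha1 i)
    have h2 : ∑ i : Fin μ, (1 - ∑ y ∈ Finset.univ.filter (fun y => f y ≤ f xρ), M (Z i) y)
        ≤ (μ : ℝ) * (1 - p) := by
      have h3 : ∀ i : Fin μ,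
          1 - ∑ y ∈ Finset.univ.filter (fun y => f y ≤ f xρ), M (Z i) y ≤ 1 - p := by
        intro i
        rw [hsplit (Z i)]
        have := hfact3 (Z i) (hfz i) (hznb i)
        linarith
      calc ∑ i : Fin μ, (1 - ∑ y ∈ Finset.univ.filter (fun y => f y ≤ f xρ), M (Z i) y)
          ≤ ∑ _i : Fin μ, (1 - p) := Finset.sum_le_sum fun i _ => h3 i
        _ = (μ : ℝ) * (1 - p) := by simp [mul_comm]; ring
    linarith
  -- put everything together

  rw [hswapA]
  have final : 1 - (μ : ℝ) * (1 - p)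
      ≤ ∑ Y : Fin μ → S, (∏ i, M (Z i) (Y i)) * ∑ W ∈ Aset, PS Z Y W := by
    have := step1
    have := step2
    rw [step3] at step2
    rw [← hprod] at hprodlb
    linarith [step1, step2, step4, hbr0, hprodlb]
  exact final


/-- for a `(1+1)` elitist EA and a `(μ+μ)` elitist EA (`μ ≥ 2`) with the
same mutation operator `M` on the same fitness function `f`, `S_non ≠ ∅`, letting
`x_ρ` maximize `P¹(x,x)` over non-optimal `x`: if from every population in
`S^μ_same(x_ρ)` containing no bridgeable point of `x_ρ` the one-step transition
probability into the set `S^μ_bridge(x_ρ)` of populations containing a bridgeable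
point of `x_ρ` is zero (no road over a bridge), then no superlinear ρ-scalability takes
place: `1 - ρ(Q^μ) ≤ μ(1 - P¹(x_ρ,x_ρ)) = μ(1 - ρ(Q¹))`. -/
theorem stmt_11 (f : S → ℝ) (M : Matrix S S ℝ)
    (hM0 : ∀ x y, 0 ≤ M x y) (hM1 : ∀ x, ∑ y, M x y = 1)
    (μ : ℕ) (hμ : 2 ≤ μ)
    (best : (Fin μ → S) → S)
    (hbest_mem : ∀ X, ∃ i, best X = X i)
    (hbest_max : ∀ X i, f (X i) ≤ f (best X))
    (hbest_tie : ∀ X i, f (X i) = f (best X) → X i ≤ best X)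
    (PS : (Fin μ → S) → (Fin μ → S) → (Fin μ → S) → ℝ)
    (hPS0 : ∀ X Y Z, 0 ≤ PS X Y Z)
    (hPS1 : ∀ X Y, ∑ Z : Fin μ → S, PS X Y Z = 1)
    (hPS_src : ∀ X Y Z, 0 < PS X Y Z → ∀ i, (∃ j, Z i = X j) ∨ (∃ j, Z i = Y j))
    (hPS_elite : ∀ X Y Z, 0 < PS X Y Z →
      (f (best X) < f (best Y) → best Z = best Y) ∧
      (¬ f (best X) < f (best Y) → best Z = best X))
    (hSnon : ∃ x : S, Snon f x)
    (xρ : S) (hxρ : Snon f xρ)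
    (hxρmax : ∀ x, Snon f x → P1 f M x x ≤ P1 f M xρ xρ)
    (hnobridge : ∀ Z : Fin μ → S, (∀ i, Snon f (Z i)) → best Z = xρ →
      (¬ ∃ i, Bridgeable f M xρ (Z i)) →
      ∑ W ∈ Finset.univ.filter (fun W : Fin μ → S => ∃ i, Bridgeable f M xρ (W i)),
        Pmu M PS Z W = 0) :
    1 - specRad (Qmu f M PS) ≤ (μ : ℝ) * (1 - P1 f M xρ xρ) ∧
      (μ : ℝ) * (1 - P1 f M xρ xρ) = (μ : ℝ) * (1 - specRad (Q1 f M)) := by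
  constructor
  · -- part (a): 1 - specRad(Qmu) ≤ μ(1 - P1 xρ xρ)
    set p := P1 f M xρ xρ with hp
    have hrow := stmt_11_core f M hM0 hM1 μ hμ best hbest_mem hbest_max hbest_tie PS hPS0
      hPS1 hPS_src hPS_elite hSnon xρ hxρ hxρmax hnobridge
    set σA : Finset {X : Fin μ → S // ∀ i, Snon f (X i)} := Finset.univ.filter
      (fun Z => best Z.1 = xρ ∧ ¬ ∃ i, Bridgeable f M xρ (Z.1 i)) with hσA
    set Aset : Finset (Fin μ → S) := Finset.univ.filter (fun W : Fin μ → S =>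
      (∀ i, Snon f (W i)) ∧ best W = xρ ∧ ¬ ∃ i, Bridgeable f M xρ (W i)) with hAset
    have hQ0 : ∀ Z W : {X : Fin μ → S // ∀ i, Snon f (X i)}, 0 ≤ Qmu f M PS Z W := by
      intro Z W
      simp only [Qmu, Pmu, Matrix.of_apply]
      exact Finset.sum_nonneg fun Y _ =>
        mul_nonneg (Finset.prod_nonneg fun i _ => hM0 _ _) (hPS0 _ _ _)
    have hsum_eq : ∀ Z : {X : Fin μ → S // ∀ i, Snon f (X i)},
        ∑ W ∈ σA, Qmu f M PS Z W = ∑ W ∈ Aset, Pmu M PS Z.1 W := by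
      intro Z
      refine Finset.sum_bij
        (fun (W : {X : Fin μ → S // ∀ i, Snon f (X i)}) (_ : W ∈ σA) => W.1) ?_ ?_ ?_ ?_
      · intro W hW
        rw [hσA, Finset.mem_filter] at hW
        rw [hAset, Finset.mem_filter]
        exact ⟨Finset.mem_univ _, W.2, hW.2.1, hW.2.2⟩
      · intro a _ b _ h; exact Subtype.ext h
      · intro w hw
        rw [hAset, Finset.mem_filter] at hw
        refine ⟨⟨w, hw.2.1⟩, ?_, rfl⟩
        rw [hσA, Finset.mem_filter]
        exact ⟨Finset.mem_univ _, hw.2.2.1, hw.2.2.2⟩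
      · intro W hW; rfl
    have hrowσ : ∀ Z ∈ σA, 1 - (μ : ℝ) * (1 - p) ≤ ∑ W ∈ σA, Qmu f M PS Z W := by
      intro Z hZ
      rw [hσA, Finset.mem_filter] at hZ
      rw [hsum_eq Z, hAset]
      exact hrow Z.1 Z.2 hZ.2.1 hZ.2.2
    have hZρA : (⟨fun _ => xρ, fun _ => hxρ⟩ : {X : Fin μ → S // ∀ i, Snon f (X i)}) ∈ σA := by
      rw [hσA, Finset.mem_filter]
      refine ⟨Finset.mem_univ _, ?_, ?_⟩
      · obtain ⟨i, hi⟩ := hbest_mem (fun _ => xρ)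
        exact hi
      · rintro ⟨i, hb, -, -⟩
        exact hb rfl
    rcases le_or_gt (1 - (μ : ℝ) * (1 - p)) 0 with hc | hc
    · have := aux_specRad_nonneg (Qmu f M PS)
      linarith
    · have hQk : ∀ (k : ℕ) Zm Wm, 0 ≤ (Qmu f M PS ^ k) Zm Wm := fun k =>
        aux_pow_entries_nonneg _ hQ0 k
      have hpow : ∀ k : ℕ, ∀ Z ∈ σA,
          (1 - (μ : ℝ) * (1 - p)) ^ k ≤ ∑ W ∈ σA, (Qmu f M PS ^ k) Z W := by
        intro k
        induction k with
        | zero =>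
          intro Z hZ
          rw [pow_zero, pow_zero]
          simp only [Matrix.one_apply]
          rw [Finset.sum_ite_eq]
          simp [hZ]
        | succ k ih =>
          intro Z hZ
          have hmulapp : ∑ W ∈ σA, (Qmu f M PS ^ (k + 1)) Z W
              = ∑ V : {X : Fin μ → S // ∀ i, Snon f (X i)},
                  Qmu f M PS Z V * ∑ W ∈ σA, (Qmu f M PS ^ k) V W := by
            simp_rw [pow_succ', Matrix.mul_apply]
            rw [Finset.sum_comm]
            simp_rw [← Finset.mul_sum]
          rw [hmulapp]
          have hck : 0 ≤ (1 - (μ : ℝ) * (1 - p)) ^ k := pow_nonneg hc.le k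
          have t1 : ∑ V ∈ σA, Qmu f M PS Z V * (1 - (μ : ℝ) * (1 - p)) ^ k
              ≤ ∑ V ∈ σA, Qmu f M PS Z V * ∑ W ∈ σA, (Qmu f M PS ^ k) V W :=
            Finset.sum_le_sum fun V hV => mul_le_mul_of_nonneg_left (ih V hV) (hQ0 Z V)
          have t2 : ∑ V ∈ σA, Qmu f M PS Z V * ∑ W ∈ σA, (Qmu f M PS ^ k) V W
              ≤ ∑ V : {X : Fin μ → S // ∀ i, Snon f (X i)},
                  Qmu f M PS Z V * ∑ W ∈ σA, (Qmu f M PS ^ k) V W :=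
            Finset.sum_le_sum_of_subset_of_nonneg (Finset.subset_univ _)
              fun V _ _ => mul_nonneg (hQ0 Z V) (Finset.sum_nonneg fun W _ => hQk k V W)
          have t3 : (1 - (μ : ℝ) * (1 - p)) ^ (k + 1)
              ≤ ∑ V ∈ σA, Qmu f M PS Z V * (1 - (μ : ℝ) * (1 - p)) ^ k := by
            have hr := hrowσ Z hZ
            calc (1 - (μ : ℝ) * (1 - p)) ^ (k + 1)
                = (1 - (μ : ℝ) * (1 - p)) * (1 - (μ : ℝ) * (1 - p)) ^ k := by ring
              _ ≤ (∑ V ∈ σA, Qmu f M PS Z V) * (1 - (μ : ℝ) * (1 - p)) ^ k :=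
                  mul_le_mul_of_nonneg_right hr hck
              _ = ∑ V ∈ σA, Qmu f M PS Z V * (1 - (μ : ℝ) * (1 - p)) ^ k := Finset.sum_mul _ _ _
          linarith
      have hge : 1 - (μ : ℝ) * (1 - p) ≤ specRad (Qmu f M PS) := by
        refine aux_specRad_ge (Qmu f M PS) _ hc fun k => ?_
        refine ⟨⟨fun _ => xρ, fun _ => hxρ⟩, ?_⟩
        have h1 := hpow k _ hZρA
        have h2 : ∑ W ∈ σA, (Qmu f M PS ^ k) (⟨fun _ => xρ, fun _ => hxρ⟩ :
              {X : Fin μ → S // ∀ i, Snon f (X i)}) W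
            ≤ ∑ W ∈ σA, |(Qmu f M PS ^ k) (⟨fun _ => xρ, fun _ => hxρ⟩ :
              {X : Fin μ → S // ∀ i, Snon f (X i)}) W| :=
          Finset.sum_le_sum fun W _ => le_abs_self _
        have h3 : ∑ W ∈ σA, |(Qmu f M PS ^ k) (⟨fun _ => xρ, fun _ => hxρ⟩ :
              {X : Fin μ → S // ∀ i, Snon f (X i)}) W|
            ≤ ∑ W : {X : Fin μ → S // ∀ i, Snon f (X i)},
                |(Qmu f M PS ^ k) (⟨fun _ => xρ, fun _ => hxρ⟩ :
                  {X : Fin μ → S // ∀ i, Snon f (X i)}) W| :=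
          Finset.sum_le_sum_of_subset_of_nonneg (Finset.subset_univ _)
            fun W _ _ => abs_nonneg _
        linarith
      linarith
  · -- part (b): specRad (Q1 f M) = P1 f M xρ xρ
    rw [aux_Q1_specRad f M hM0 xρ hxρ hxρmax]
end

section
/- Consider the (1+1) elitist EA and a (μ+μ) elitist EA with μ ≥ 2 using the same mutation operator M on the same fitness function f, as in the model below, with S_non nonempty. Suppose the fitness landscape associated with the (1+1) EA is non-bridgeable, i.e. for any two distinct non-optimal individuals x, y ∈ S_non with f(x) ≥ f(y) one has M(x, S¹_high(x)) > M(y, S¹_high(x)). Then no superlinear ρ-scalability happens: 1 − ρ(Q^μ) ≤ μ(1 − ρ(Q¹)). -/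
open Matrix

variable {S : Type*} [Fintype S] [LinearOrder S]

namespace Stmt12Aux

attribute [local instance] Matrix.linftyOpNormedRing Matrix.linftyOpNormedAlgebra

variable {n : Type*} [Fintype n] [DecidableEq n]

noncomputable local instance : CompleteSpace (Matrix n n ℂ) :=
  FiniteDimensional.complete ℂ (Matrix n n ℂ)

lemma specRad_nonneg (A : Matrix n n ℝ) : 0 ≤ specRad A :=
  Real.sSup_nonneg (by rintro x ⟨z, _, rfl⟩; exact norm_nonneg z)

lemma bddAbove_specSet (A : Matrix n n ℝ) :
    BddAbove ((fun z => ‖z‖) '' spectrum ℂ (A.map Complex.ofReal)) :=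
  ((spectrum.isCompact _).image continuous_norm).bddAbove

lemma specRad_le {A : Matrix n n ℝ} {r : ℝ} (hr : 0 ≤ r)
    (h : ∀ z ∈ spectrum ℂ (A.map Complex.ofReal), ‖z‖ ≤ r) : specRad A ≤ r :=
  Real.sSup_le (by rintro x ⟨z, hz, rfl⟩; exact h z hz) hr

end Stmt12Aux

namespace Stmt12Aux
open Finset

variable {n : Type*} [Fintype n] [DecidableEq n]

lemma spectrum_triangular {A : Matrix n n ℝ} (g : n → ℝ)
    (h : ∀ i j, i ≠ j → ¬ g i < g j → A i j = 0)
    {z : ℂ} (hz : z ∈ spectrum ℂ (A.map Complex.ofReal)) :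
    ∃ i, z = (A i i : ℂ) := by
  classical
  by_contra hc
  push_neg at hc
  rw [spectrum.mem_iff] at hz
  apply hz
  rw [Matrix.isUnit_iff_isUnit_det, isUnit_iff_ne_zero]
  set N : Matrix n n ℂ := algebraMap ℂ (Matrix n n ℂ) z - A.map Complex.ofReal with hN
  have hentry : ∀ i j, N i j = (if i = j then z - (A i i : ℂ) else
      if g i < g j then - (A i j : ℂ) else 0) := by
    intro i j
    simp only [hN, Matrix.sub_apply, Matrix.algebraMap_matrix_apply, Matrix.map_apply]
    split_ifs with h1 h2
    · subst h1; simp [Algebra.algebraMap_self]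
    · simp
    · rw [h i j h1 h2]; simp
  have htri : N.BlockTriangular g := by
    intro i j hij
    rw [hentry]
    have hne : i ≠ j := by rintro rfl; exact lt_irrefl _ hij
    rw [if_neg hne, if_neg (not_lt.2 hij.le)]
  rw [htri.det]
  apply Finset.prod_ne_zero_iff.2
  intro a _
  have hblock : N.toSquareBlock g a =
      Matrix.diagonal (fun i : {i // g i = a} => z - (A i.1 i.1 : ℂ)) := by
    ext i j
    by_cases hij : i = j
    · subst hij
      simp [Matrix.toSquareBlock_def, Matrix.diagonal_apply_eq, hentry]
    · have hij' : i.1 ≠ j.1 := fun hh => hij (Subtype.ext hh)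
      have : ¬ g i.1 < g j.1 := by rw [i.2, j.2]; exact lt_irrefl a
      simp [Matrix.toSquareBlock_def, Matrix.diagonal_apply_ne _ hij, hentry, hij', this]
  rw [hblock, Matrix.det_diagonal]
  apply Finset.prod_ne_zero_iff.2
  intro i _
  exact sub_ne_zero_of_ne (fun hh => hc i.1 hh)

end Stmt12Aux

namespace Stmt12Aux
open Finset

variable {n : Type*} [Fintype n] [DecidableEq n]

lemma pow_entry_nonneg {A : Matrix n n ℝ} (hA : ∀ i j, 0 ≤ A i j) (k : ℕ) :
    ∀ i j, 0 ≤ (A ^ k) i j := by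
  induction k with
  | zero => intro i j; rw [pow_zero]; by_cases h : i = j <;> simp [Matrix.one_apply, h]
  | succ k ih =>
    intro i j
    rw [pow_succ, Matrix.mul_apply]
    exact Finset.sum_nonneg fun l _ => mul_nonneg (ih i l) (hA l j)

lemma pow_rowsum_ge {A : Matrix n n ℝ} (hA : ∀ i j, 0 ≤ A i j) {lam : ℝ} (hlam : 0 ≤ lam)
    {T : Finset n} (hrow : ∀ i ∈ T, lam ≤ ∑ j ∈ T, A i j) (k : ℕ) :
    ∀ i ∈ T, lam ^ k ≤ ∑ j ∈ T, (A ^ k) i j := by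
  induction k with
  | zero =>
    intro i hi
    rw [pow_zero]
    have : (1 : ℝ) = ∑ j ∈ T, (1 : Matrix n n ℝ) i j := by
      rw [Finset.sum_eq_single i]
      · simp [Matrix.one_apply]
      · intro b _ hb; simp [Matrix.one_apply, (Ne.symm hb)]
      · intro h; exact absurd hi h
    rw [pow_zero, ← this]
  | succ k ih =>
    intro i hi
    calc lam ^ (k + 1) = lam ^ k * lam := by ring
    _ ≤ lam ^ k * ∑ j ∈ T, A i j := by
        exact mul_le_mul_of_nonneg_left (hrow i hi) (pow_nonneg hlam k)
    _ = ∑ j ∈ T, A i j * lam ^ k := by rw [Finset.mul_sum]; congr 1; ext j; ring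
    _ ≤ ∑ j ∈ T, A i j * ∑ l ∈ T, (A ^ k) j l := by
        refine Finset.sum_le_sum fun j hj => mul_le_mul_of_nonneg_left (ih j hj) (hA i j)
    _ = ∑ j ∈ T, ∑ l ∈ T, A i j * (A ^ k) j l := by
        congr 1; ext j; rw [Finset.mul_sum]
    _ = ∑ l ∈ T, ∑ j ∈ T, A i j * (A ^ k) j l := Finset.sum_comm
    _ ≤ ∑ l ∈ T, ∑ j, A i j * (A ^ k) j l := by
        refine Finset.sum_le_sum fun l _ => ?_
        refine Finset.sum_le_sum_of_subset_of_nonneg (Finset.subset_univ T) ?_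
        intro j _ _
        exact mul_nonneg (hA i j) (pow_entry_nonneg hA k j l)
    _ = ∑ l ∈ T, (A ^ (k + 1)) i l := by
        refine Finset.sum_congr rfl fun l _ => ?_
        rw [pow_succ', Matrix.mul_apply]

end Stmt12Aux

namespace Stmt12Aux
open Finset Filter
open scoped ENNReal NNReal

attribute [local instance] Matrix.linftyOpNormedRing Matrix.linftyOpNormedAlgebra

variable {n : Type*} [Fintype n] [DecidableEq n]

noncomputable local instance inst_s12 : CompleteSpace (Matrix n n ℂ) :=
  FiniteDimensional.complete ℂ (Matrix n n ℂ)

lemma le_specRad_of_rowsum [Nonempty n] {A : Matrix n n ℝ}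
    (hA : ∀ i j, 0 ≤ A i j) {lam : ℝ} (hlam : 0 ≤ lam)
    {T : Finset n} (hT : T.Nonempty)
    (hrow : ∀ i ∈ T, lam ≤ ∑ j ∈ T, A i j) : lam ≤ specRad A := by
  classical
  obtain ⟨i₀, hi₀⟩ := hT
  set a : Matrix n n ℂ := A.map Complex.ofReal with ha
  -- step 1 : ‖a ^ k‖ ≥ lam ^ k
  have hnorm : ∀ k : ℕ, ENNReal.ofReal (lam ^ k) ≤ (‖a ^ k‖₊ : ℝ≥0∞) := by
    intro k
    have hmap : a ^ k = (A ^ k).map Complex.ofReal := by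
      rw [ha]
      induction k with
      | zero =>
        rw [pow_zero, pow_zero, Matrix.map_one _ Complex.ofReal_zero Complex.ofReal_one]
      | succ k ih =>
        rw [pow_succ, pow_succ, ih]
        ext i j
        simp only [Matrix.mul_apply, Matrix.map_apply]
        push_cast
        rfl
    have h1 : lam ^ k ≤ ∑ j ∈ T, (A ^ k) i₀ j := pow_rowsum_ge hA hlam hrow k i₀ hi₀
    have h2 : ∑ j ∈ T, (A ^ k) i₀ j ≤ ∑ j, ‖(a ^ k) i₀ j‖ := by
      calc ∑ j ∈ T, (A ^ k) i₀ j ≤ ∑ j, (A ^ k) i₀ j :=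
            Finset.sum_le_sum_of_subset_of_nonneg (Finset.subset_univ T)
              (fun j _ _ => pow_entry_nonneg hA k i₀ j)
      _ ≤ ∑ j, ‖(a ^ k) i₀ j‖ := by
            refine Finset.sum_le_sum fun j _ => ?_
            rw [hmap]
            simp only [Matrix.map_apply, Complex.norm_real]
            exact le_abs_self _
    have h3 : ∑ j, ‖(a ^ k) i₀ j‖ ≤ ‖a ^ k‖ := by
      rw [Matrix.linfty_opNorm_def]
      have := Finset.le_sup (f := fun i => ∑ j, ‖(a ^ k) i j‖₊) (Finset.mem_univ i₀)
      have hcoe : ((∑ j, ‖(a ^ k) i₀ j‖₊ : ℝ≥0) : ℝ) = ∑ j, ‖(a ^ k) i₀ j‖ := by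
        push_cast; rfl
      calc ∑ j, ‖(a ^ k) i₀ j‖ = ((∑ j, ‖(a ^ k) i₀ j‖₊ : ℝ≥0) : ℝ) := hcoe.symm
      _ ≤ _ := by exact_mod_cast this
    rw [← ENNReal.ofReal_coe_nnreal, coe_nnnorm]
    exact ENNReal.ofReal_le_ofReal (le_trans h1 (le_trans h2 h3))
  -- step 2 : Gelfand
  have hgel := spectrum.pow_nnnorm_pow_one_div_tendsto_nhds_spectralRadius a
  have hev : ∀ᶠ k : ℕ in atTop, ENNReal.ofReal lam ≤ (‖a ^ k‖₊ : ℝ≥0∞) ^ (1 / (k : ℝ)) := by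
    filter_upwards [eventually_ge_atTop 1] with k hk
    have hk0 : (k : ℝ) ≠ 0 := by positivity
    have hc : ENNReal.ofReal lam = ((ENNReal.ofReal lam) ^ k) ^ (1 / (k : ℝ)) := by
      rw [← ENNReal.rpow_natCast (ENNReal.ofReal lam) k, ← ENNReal.rpow_mul,
        mul_one_div, div_self hk0, ENNReal.rpow_one]
    rw [hc, ← ENNReal.ofReal_pow hlam]
    exact ENNReal.rpow_le_rpow (hnorm k) (by positivity)
  have hle : ENNReal.ofReal lam ≤ spectralRadius ℂ a := ge_of_tendsto hgel hev
  -- step 3 : spectralRadius ≤ ofReal (specRad A)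
  have hle2 : spectralRadius ℂ a ≤ ENNReal.ofReal (specRad A) := by
    rw [spectralRadius]
    refine iSup₂_le fun z hz => ?_
    rw [← ENNReal.ofReal_coe_nnreal, coe_nnnorm]
    exact ENNReal.ofReal_le_ofReal (le_csSup (bddAbove_specSet A) ⟨z, hz, rfl⟩)
  have := le_trans hle hle2
  rwa [ENNReal.ofReal_le_ofReal_iff (specRad_nonneg A)] at this

end Stmt12Aux

namespace Stmt12Aux

lemma one_sub_sum_le_prod {ι : Type*} (t : Finset ι) (a : ι → ℝ)
    (h0 : ∀ i ∈ t, 0 ≤ a i) (h1 : ∀ i ∈ t, a i ≤ 1) :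
    1 - ∑ i ∈ t, a i ≤ ∏ i ∈ t, (1 - a i) := by
  classical
  induction t using Finset.induction_on with
  | empty => simp
  | insert _ _ hit ih =>
    rename_i i t
    rw [Finset.prod_insert hit, Finset.sum_insert hit]
    have ht0 : 0 ≤ ∑ j ∈ t, a j :=
      Finset.sum_nonneg fun j hj => h0 j (Finset.mem_insert_of_mem hj)
    have hi0 : 0 ≤ a i := h0 i (Finset.mem_insert_self i t)
    have hi1 : a i ≤ 1 := h1 i (Finset.mem_insert_self i t)
    have ih' := ih (fun j hj => h0 j (Finset.mem_insert_of_mem hj))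
      (fun j hj => h1 j (Finset.mem_insert_of_mem hj))
    nlinarith [ih']

end Stmt12Aux


/-- for a `(1+1)` elitist EA and a `(μ+μ)` elitist EA (`μ ≥ 2`) with the
same mutation operator `M` on the same fitness function `f`, `S_non ≠ ∅`: if the
fitness landscape of the `(1+1)` EA is non-bridgeable (for distinct non-optimal `x, y`
with `f x ≥ f y` one has `M(x, S¹_high(x)) > M(y, S¹_high(x))`), then no superlinear
ρ-scalability happens: `1 - ρ(Q^μ) ≤ μ(1 - ρ(Q¹))`. -/
theorem stmt_12 (f : S → ℝ) (M : Matrix S S ℝ)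
    (hM0 : ∀ x y, 0 ≤ M x y) (hM1 : ∀ x, ∑ y, M x y = 1)
    (μ : ℕ) (hμ : 2 ≤ μ)
    (best : (Fin μ → S) → S)
    (hbest_mem : ∀ X, ∃ i, best X = X i)
    (hbest_max : ∀ X i, f (X i) ≤ f (best X))
    (hbest_tie : ∀ X i, f (X i) = f (best X) → X i ≤ best X)
    (PS : (Fin μ → S) → (Fin μ → S) → (Fin μ → S) → ℝ)
    (hPS0 : ∀ X Y Z, 0 ≤ PS X Y Z)
    (hPS1 : ∀ X Y, ∑ Z : Fin μ → S, PS X Y Z = 1)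
    (hPS_src : ∀ X Y Z, 0 < PS X Y Z → ∀ i, (∃ j, Z i = X j) ∨ (∃ j, Z i = Y j))
    (hPS_elite : ∀ X Y Z, 0 < PS X Y Z →
      (f (best X) < f (best Y) → best Z = best Y) ∧
      (¬ f (best X) < f (best Y) → best Z = best X))
    (hSnon : ∃ x : S, Snon f x)
    (hnonbridge : ∀ x y : S, Snon f x → Snon f y → x ≠ y → f y ≤ f x →
      Mhigh f M x y < Mhigh f M x x) :
    1 - specRad (Qmu f M PS) ≤ (μ : ℝ) * (1 - specRad (Q1 f M)) := by
  classical
  obtain ⟨x0, hx0⟩ := hSnon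
  set SN : Finset S := Finset.univ.filter (fun x => Snon f x) with hSN
  have hSNne : SN.Nonempty := ⟨x0, by rw [hSN, Finset.mem_filter]; exact ⟨Finset.mem_univ _, hx0⟩⟩
  obtain ⟨xh, hxhSN, hxhmin⟩ := Finset.exists_min_image SN (fun x => Mhigh f M x x) hSNne
  have hxh : Snon f xh := by
    have := hxhSN; rw [hSN, Finset.mem_filter] at this; exact this.2
  set m := Mhigh f M xh xh with hm
  have hMhigh_nonneg : ∀ x y : S, 0 ≤ Mhigh f M x y := fun x y =>
    Finset.sum_nonneg fun z _ => hM0 y z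
  have hMhigh_le_one : ∀ x y : S, Mhigh f M x y ≤ 1 := fun x y => by
    rw [← hM1 y]
    exact Finset.sum_le_sum_of_subset_of_nonneg (Finset.filter_subset _ _)
      (fun z _ _ => hM0 y z)
  have hm_le : ∀ x : S, Snon f x → m ≤ Mhigh f M x x := fun x hx =>
    hxhmin x (by rw [hSN, Finset.mem_filter]; exact ⟨Finset.mem_univ x, hx⟩)
  have hm0 : 0 ≤ m := hMhigh_nonneg xh xh
  have hm1 : m ≤ 1 := hMhigh_le_one xh xh
  -- Q1 diagonal
  have hQ1diag : ∀ a : {x : S // Snon f x}, Q1 f M a a = 1 - Mhigh f M a.1 a.1 := by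
    intro a
    have h1 : Q1 f M a a = ∑ y ∈ Finset.univ.filter (fun y => f y ≤ f a.1), M a.1 y := by
      simp [Q1, P1]
    have h2 : Finset.univ.filter (fun y => f y ≤ f a.1)
        = Finset.univ.filter (fun y => ¬ f a.1 < f y) := by
      apply Finset.filter_congr; intro y _; simp [not_lt]
    have h3 := Finset.sum_filter_add_sum_filter_not Finset.univ
      (fun y => f a.1 < f y) (fun y => M a.1 y)
    rw [hM1 a.1] at h3
    rw [h1, h2]
    have : Mhigh f M a.1 a.1
        = ∑ y ∈ Finset.univ.filter (fun y => f a.1 < f y), M a.1 y := rfl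
    linarith [h3]
  -- Q1 spectral radius bound
  have hQ1 : specRad (Q1 f M) ≤ 1 - m := by
    apply Stmt12Aux.specRad_le (by linarith)
    intro z hz
    have htri : ∀ i j : {x : S // Snon f x}, i ≠ j → ¬ f i.1 < f j.1 → Q1 f M i j = 0 := by
      intro i j hij hnlt
      have hne : j.1 ≠ i.1 := fun h => hij (Subtype.ext h.symm)
      simp [Q1, P1, hnlt, hne]
    obtain ⟨a, ha⟩ := Stmt12Aux.spectrum_triangular (fun a : {x : S // Snon f x} => f a.1)
      htri hz
    rw [ha, Complex.norm_real, Real.norm_eq_abs]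
    have hd := hQ1diag a
    have h1 : m ≤ Mhigh f M a.1 a.1 := hm_le a.1 a.2
    have h2 : Mhigh f M a.1 a.1 ≤ 1 := hMhigh_le_one _ _
    rw [hd, abs_of_nonneg (by linarith)]
    linarith
  -- populations
  haveI hne : Nonempty {X : Fin μ → S // ∀ i, Snon f (X i)} :=
    ⟨⟨fun _ => xh, fun _ => hxh⟩⟩
  set T : Finset {X : Fin μ → S // ∀ i, Snon f (X i)} :=
    Finset.univ.filter (fun A => best A.1 = xh) with hT
  have hTne : T.Nonempty := by
    refine ⟨⟨fun _ => xh, fun _ => hxh⟩, ?_⟩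
    rw [hT, Finset.mem_filter]
    refine ⟨Finset.mem_univ _, ?_⟩
    obtain ⟨i, hi⟩ := hbest_mem (fun _ => xh)
    simpa using hi
  have hQmu_nonneg : ∀ A B : {X : Fin μ → S // ∀ i, Snon f (X i)},
      0 ≤ Qmu f M PS A B := fun A B =>
    Finset.sum_nonneg fun Y _ =>
      mul_nonneg (Finset.prod_nonneg fun i _ => hM0 _ _) (hPS0 _ _ _)
  -- row sums over T
  have hrow : ∀ A ∈ T, 1 - (μ : ℝ) * m ≤ ∑ B ∈ T, Qmu f M PS A B := by
    intro A hA
    have hbestA : best A.1 = xh := by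
      rw [hT, Finset.mem_filter] at hA; exact hA.2
    set X := A.1 with hX
    set s : Finset S := Finset.univ.filter (fun y => ¬ f xh < f y) with hs
    set G : Finset (Fin μ → S) := Fintype.piFinset (fun _ => s) with hG
    have hswap : ∑ B ∈ T, Qmu f M PS A B
        = ∑ Y : Fin μ → S, (∏ i, M (X i) (Y i)) * ∑ B ∈ T, PS X Y B.1 := by
      simp only [Qmu, Pmu, Matrix.of_apply]
      rw [Finset.sum_comm]
      exact Finset.sum_congr rfl fun Y _ => (Finset.mul_sum _ _ _).symm
    have hinner : ∀ Y ∈ G, ∑ B ∈ T, PS X Y B.1 = 1 := by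
      intro Y hY
      have hYgood : ∀ i, ¬ f xh < f (Y i) := by
        intro i
        have := Fintype.mem_piFinset.1 hY i
        rw [hs, Finset.mem_filter] at this
        exact this.2
      have hfbY : ¬ f (best X) < f (best Y) := by
        obtain ⟨i, hi⟩ := hbest_mem Y
        rw [hbestA, hi]
        exact hYgood i
      have hcover : ∀ Z, Z ∉ T.image Subtype.val → PS X Y Z = 0 := by
        intro Z hZ
        by_contra hne0
        have hpos : 0 < PS X Y Z := lt_of_le_of_ne (hPS0 X Y Z) (Ne.symm hne0)
        have hZnon : ∀ i, Snon f (Z i) := by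
          intro i
          rcases hPS_src X Y Z hpos i with ⟨j, hj⟩ | ⟨j, hj⟩
          · rw [hj]; exact A.2 j
          · rw [hj]
            intro hopt
            exact hxh fun w => le_trans (hopt w) (not_lt.1 (hYgood j))
        have hbZ : best Z = xh := by
          rw [(hPS_elite X Y Z hpos).2 hfbY, hbestA]
        exact hZ (Finset.mem_image.2 ⟨⟨Z, hZnon⟩, by
          rw [hT, Finset.mem_filter]; exact ⟨Finset.mem_univ _, hbZ⟩, rfl⟩)
      have himg : ∑ B ∈ T, PS X Y B.1 = ∑ Z ∈ T.image Subtype.val, PS X Y Z :=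
        (Finset.sum_image fun a _ b _ h => Subtype.ext h).symm
      rw [himg, Finset.sum_subset (Finset.subset_univ _) (fun Z _ hZ => hcover Z hZ)]
      exact hPS1 X Y
    have hstep : ∑ Y ∈ G, ∏ i, M (X i) (Y i) ≤ ∑ B ∈ T, Qmu f M PS A B := by
      rw [hswap]
      calc ∑ Y ∈ G, ∏ i, M (X i) (Y i)
          = ∑ Y ∈ G, (∏ i, M (X i) (Y i)) * ∑ B ∈ T, PS X Y B.1 := by
            refine Finset.sum_congr rfl fun Y hY => ?_
            rw [hinner Y hY, mul_one]
      _ ≤ _ := Finset.sum_le_sum_of_subset_of_nonneg (Finset.subset_univ G)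
            (fun Y _ _ => mul_nonneg (Finset.prod_nonneg fun i _ => hM0 _ _)
              (Finset.sum_nonneg fun B _ => hPS0 _ _ _))
    have hprod : ∑ Y ∈ G, ∏ i, M (X i) (Y i) = ∏ i, (1 - Mhigh f M xh (X i)) := by
      rw [hG, ← Finset.prod_univ_sum]
      refine Finset.prod_congr rfl fun i _ => ?_
      have h3 := Finset.sum_filter_add_sum_filter_not Finset.univ
        (fun y => f xh < f y) (fun y => M (X i) y)
      rw [hM1 (X i)] at h3
      have : Mhigh f M xh (X i)
          = ∑ y ∈ Finset.univ.filter (fun y => f xh < f y), M (X i) y := rfl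
      rw [hs]
      linarith [h3]
    have hai : ∀ i : Fin μ, Mhigh f M xh (X i) ≤ m := by
      intro i
      by_cases hxi : X i = xh
      · rw [hxi]
      · refine le_of_lt (hnonbridge xh (X i) hxh (A.2 i) (Ne.symm hxi) ?_)
        rw [← hbestA]
        exact hbest_max X i
    have hW : 1 - ∑ i : Fin μ, Mhigh f M xh (X i) ≤ ∏ i, (1 - Mhigh f M xh (X i)) :=
      Stmt12Aux.one_sub_sum_le_prod _ _ (fun i _ => hMhigh_nonneg _ _)
        (fun i _ => hMhigh_le_one _ _)
    have hsum : ∑ i : Fin μ, Mhigh f M xh (X i) ≤ (μ : ℝ) * m := by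
      calc ∑ i : Fin μ, Mhigh f M xh (X i) ≤ ∑ _i : Fin μ, m :=
            Finset.sum_le_sum fun i _ => hai i
      _ = (μ : ℝ) * m := by
            rw [Finset.sum_const, Finset.card_univ, Fintype.card_fin, nsmul_eq_mul]
    have := hprod ▸ hW
    linarith [hstep]
  have hQmu : 1 - (μ : ℝ) * m ≤ specRad (Qmu f M PS) := by
    rcases le_or_gt (1 - (μ : ℝ) * m) 0 with h | h
    · exact le_trans h (Stmt12Aux.specRad_nonneg _)
    · exact Stmt12Aux.le_specRad_of_rowsum hQmu_nonneg (le_of_lt h) hTne hrow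
  have hfin : (μ : ℝ) * m ≤ (μ : ℝ) * (1 - specRad (Q1 f M)) :=
    mul_le_mul_of_nonneg_left (by linarith) (by positivity)
  linarith
end
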